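/- arXiv:1501.01889 — 6 statements merged into one kernel-verified Lean document; each statement's English description precedes it below -/
import Mathlib

section
/- Let β ∈ ℂ with Re β > 0 and α ∈ ℂ with −1 < Re α < 0. Then g ↦ (e^{−βg} − e^{−g}) g^{α−1} is integrable on (0,∞) and ∫₀^∞ (e^{−βg} − e^{−g}) g^{α−1} dg = Γ(α) (β^{−α} − 1), where β^{−α} := exp(−α Log β) with Log the principal branch of the complex logarithm. (This extends the Mellin transform of the exponential to the strip ⟨−1,∞⟩ by subtracting e^{−g}.) -/
open MeasureTheory Set Complex Filter

lemma aux_int_rexp_rpow {c t : ℝ} (hc : 0 < c) (ht : -1 < t) :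
    IntegrableOn (fun g : ℝ => Real.exp (-(c * g)) * g ^ t) (Ioi 0) := by
  have h0 : IntegrableOn (fun x : ℝ => Real.exp (-x) * x ^ t) (Ioi 0) := by
    simpa using Real.GammaIntegral_convergent (s := t + 1) (by linarith)
  rw [show (0:ℝ) = c * 0 by ring] at h0
  have h1 : IntegrableOn (fun x : ℝ => Real.exp (-(c * x)) * (c * x) ^ t) (Ioi 0) := by
    simpa using (integrableOn_Ioi_comp_mul_left_iff (fun x : ℝ => Real.exp (-x) * x ^ t) 0 hc).mpr h0
  have h2 : IntegrableOn (fun x : ℝ => (Real.exp (-(c * x)) * (c * x) ^ t) / c ^ t) (Ioi 0) :=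
    h1.div_const _
  apply h2.congr_fun_ae
  filter_upwards [self_mem_ae_restrict measurableSet_Ioi] with x hx
  rw [Real.mul_rpow hc.le (le_of_lt hx)]
  field_simp

lemma aux_cont (s : ℂ) : ContinuousOn (fun g : ℝ => (g : ℂ) ^ s) (Ioi 0) := fun x hx =>
  (Complex.continuousAt_ofReal_cpow_const x s (Or.inr (ne_of_gt hx))).continuousWithinAt

lemma aux_norm {g : ℝ} (hg : 0 < g) (β s : ℂ) :
    ‖Complex.exp (-β * g) * (g : ℂ) ^ s‖ = Real.exp (-(β.re * g)) * g ^ s.re := by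
  rw [norm_mul, Complex.norm_exp,
    Complex.norm_cpow_eq_rpow_re_of_pos hg]
  congr 1
  simp

lemma aux_int_cexp_cpow {β : ℂ} (hβ : 0 < β.re) {s : ℂ} (hs : -1 < s.re) :
    IntegrableOn (fun g : ℝ => Complex.exp (-β * g) * (g : ℂ) ^ s) (Ioi 0) := by
  apply Integrable.mono' (aux_int_rexp_rpow hβ hs)
  · exact (((Complex.continuous_exp.comp (continuous_const.mul Complex.continuous_ofReal)).continuousOn).mul (aux_cont s)).aestronglyMeasurable measurableSet_Ioi
  · filter_upwards [self_mem_ae_restrict measurableSet_Ioi] with g hg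
    rw [aux_norm hg]

section
variable {β α : ℂ} (hβ : 0 < β.re) (hm1 : -1 < α.re) (h0 : α.re < 0)

lemma aux_cont_main (β α : ℂ) :
    ContinuousOn (fun g : ℝ => (Complex.exp (-β * g) - Complex.exp (-(g : ℂ))) * (g : ℂ) ^ (α - 1))
      (Ioi 0) := by
  apply ContinuousOn.mul _ (fun x hx =>
    (Complex.continuousAt_ofReal_cpow_const x _ (Or.inr (ne_of_gt hx))).continuousWithinAt)
  exact ((Complex.continuous_exp.comp (continuous_const.mul Complex.continuous_ofReal)).sub
    (Complex.continuous_exp.comp Complex.continuous_ofReal.neg)).continuousOn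

lemma aux_factor (β : ℂ) (g : ℝ) :
    Complex.exp (-β * g) - Complex.exp (-(g : ℂ)) =
      Complex.exp (-(g : ℂ)) * (Complex.exp ((1 - β) * g) - 1) := by
  rw [mul_sub, mul_one, ← Complex.exp_add]
  ring_nf

lemma aux_norm_diff_small {g : ℝ} (hg : 0 < g) (hg' : ‖1 - β‖ * g ≤ 1) :
    ‖Complex.exp (-β * g) - Complex.exp (-(g : ℂ))‖ ≤ 2 * ‖1 - β‖ * g := by
  rw [aux_factor, norm_mul]
  have h1 : ‖Complex.exp (-(g : ℂ))‖ ≤ 1 := by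
    rw [Complex.norm_exp]
    simp only [neg_re, ofReal_re]
    exact Real.exp_le_one_iff.mpr (by linarith)
  have h2 : ‖Complex.exp ((1 - β) * g) - 1‖ ≤ 2 * (‖1 - β‖ * g) := by
    have habs : ‖(1 - β) * g‖ ≤ 1 := by
      rw [norm_mul, Complex.norm_real, Real.norm_eq_abs, abs_of_pos hg]; exact hg'
    have := Complex.norm_exp_sub_one_le habs
    rw [norm_mul, Complex.norm_real, Real.norm_eq_abs, abs_of_pos hg] at this
    exact this
  calc ‖Complex.exp (-(g : ℂ))‖ * ‖Complex.exp ((1 - β) * g) - 1‖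
      ≤ 1 * (2 * (‖1 - β‖ * g)) := by
        apply mul_le_mul h1 h2 (norm_nonneg _) zero_le_one
    _ = 2 * ‖1 - β‖ * g := by ring

include hβ hm1 h0 in
lemma aux_int_main :
    IntegrableOn (fun g : ℝ => (Complex.exp (-β * g) - Complex.exp (-(g : ℂ))) * (g : ℂ) ^ (α - 1))
      (Ioi 0) := by
  set A := ‖1 - β‖ with hA
  set δ : ℝ := min 1 (1 / (A + 1)) with hδ
  have hA0 : 0 ≤ A := norm_nonneg _
  have hδ0 : 0 < δ := lt_min one_pos (by positivity)
  have hδ1 : δ ≤ 1 := min_le_left _ _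
  set c : ℝ := min β.re 1 with hc
  have hc0 : 0 < c := lt_min hβ one_pos
  rw [← Ioc_union_Ioi_eq_Ioi hδ0.le]
  apply IntegrableOn.union
  · -- near 0
    have hint : IntegrableOn (fun g : ℝ => (2 * A) * g ^ α.re) (Ioc 0 δ) := by
      apply Integrable.const_mul
      have := intervalIntegral.intervalIntegrable_rpow' (a := 0) (b := δ) hm1
      rwa [intervalIntegrable_iff_integrableOn_Ioc_of_le hδ0.le] at this
    apply Integrable.mono' hint
    · exact ((aux_cont_main β α).mono Ioc_subset_Ioi_self).aestronglyMeasurable measurableSet_Ioc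
    · filter_upwards [self_mem_ae_restrict measurableSet_Ioc] with g hg
      have hg0 : 0 < g := hg.1
      have hgA : A * g ≤ 1 := by
        rcases eq_or_lt_of_le hA0 with h | h
        · rw [← h]; simp
        · have : g ≤ 1 / (A + 1) := hg.2.trans (min_le_right _ _)
          rw [le_div_iff₀ (by positivity)] at this
          nlinarith
      rw [norm_mul]
      calc ‖Complex.exp (-β * g) - Complex.exp (-(g:ℂ))‖ * ‖(g : ℂ) ^ (α - 1)‖
          ≤ (2 * A * g) * g ^ (α.re - 1) := by
            apply mul_le_mul (aux_norm_diff_small hg0 hgA) _ (norm_nonneg _) (by positivity)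
            rw [Complex.norm_cpow_eq_rpow_re_of_pos hg0]
            simp
        _ = 2 * A * g ^ α.re := by
            have hgg : g ^ α.re = g * g ^ (α.re - 1) := by
              rw [show α.re = 1 + (α.re - 1) by ring, Real.rpow_add hg0, Real.rpow_one]
              ring_nf
            rw [hgg]; ring
  · -- near infinity
    have hint : IntegrableOn (fun g : ℝ => (2 * δ ^ (α.re - 1)) * Real.exp (-c * g)) (Ioi δ) :=
      (exp_neg_integrableOn_Ioi δ hc0).const_mul _
    apply Integrable.mono' hint
    · exact ((aux_cont_main β α).mono (fun x hx => hδ0.trans hx)).aestronglyMeasurable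
        measurableSet_Ioi
    · filter_upwards [self_mem_ae_restrict measurableSet_Ioi] with g hg
      have hg0 : 0 < g := hδ0.trans hg
      rw [norm_mul]
      have h1 : ‖Complex.exp (-β * g) - Complex.exp (-(g:ℂ))‖ ≤ 2 * Real.exp (-c * g) := by
        refine (norm_sub_le _ _).trans ?_
        rw [Complex.norm_exp, Complex.norm_exp]
        have e1 : Real.exp ((-β * g).re) ≤ Real.exp (-c * g) := by
          apply Real.exp_le_exp.mpr
          simp only [neg_re, mul_re, ofReal_re, ofReal_im, mul_zero, sub_zero]
          nlinarith [min_le_left β.re 1]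
        have e2 : Real.exp ((-(g:ℂ)).re) ≤ Real.exp (-c * g) := by
          apply Real.exp_le_exp.mpr
          simp only [neg_re, ofReal_re]
          nlinarith [min_le_right β.re 1]
        linarith
      have h2 : ‖(g : ℂ) ^ (α - 1)‖ ≤ δ ^ (α.re - 1) := by
        rw [Complex.norm_cpow_eq_rpow_re_of_pos hg0, Complex.sub_re,
          Complex.one_re]
        exact Real.rpow_le_rpow_of_nonpos hδ0 hg.le (by linarith)
      calc ‖Complex.exp (-β * g) - Complex.exp (-(g:ℂ))‖ * ‖(g : ℂ) ^ (α - 1)‖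
          ≤ (2 * Real.exp (-c * g)) * δ ^ (α.re - 1) :=
            mul_le_mul h1 h2 (norm_nonneg _) (by positivity)
        _ = 2 * δ ^ (α.re - 1) * Real.exp (-c * g) := by ring
end

lemma aux_meas (z s : ℂ) :
    AEStronglyMeasurable (fun g : ℝ => Complex.exp (-z * g) * (g : ℂ) ^ s)
      (volume.restrict (Ioi 0)) := by
  apply ContinuousOn.aestronglyMeasurable _ measurableSet_Ioi
  exact ((Complex.continuous_exp.comp (continuous_const.mul Complex.continuous_ofReal)).continuousOn).mul
    (fun x hx => (Complex.continuousAt_ofReal_cpow_const x _ (Or.inr (ne_of_gt hx))).continuousWithinAt)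

lemma aux_cexp_gamma {β : ℂ} (hβ : 0 < β.re) {s : ℂ} (hs : 0 < s.re) :
    ∫ g in Ioi (0 : ℝ), Complex.exp (-β * g) * (g : ℂ) ^ (s - 1) =
      Complex.exp (-s * Complex.log β) * Complex.Gamma s := by
  set U : Set ℂ := {z | 0 < z.re} with hU
  have hUopen : IsOpen U := isOpen_Ioi.preimage Complex.continuous_re
  have hUconn : IsPreconnected U := (convex_halfSpace_re_gt 0).isPreconnected
  set G : ℂ → ℂ := fun z => ∫ g in Ioi (0 : ℝ), Complex.exp (-z * g) * (g : ℂ) ^ (s - 1) with hG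
  set R : ℂ → ℂ := fun z => Complex.exp (-s * Complex.log z) * Complex.Gamma s with hR
  have hs1 : (-1 : ℝ) < (s - 1).re := by simp [Complex.sub_re]; linarith
  -- G is differentiable on U
  have hGdiff : DifferentiableOn ℂ G U := by
    intro z hz
    have hz' : 0 < z.re := hz
    set ε : ℝ := z.re / 2 with hε
    have hε0 : 0 < ε := by positivity
    have key := hasDerivAt_integral_of_dominated_loc_of_deriv_le (μ := volume.restrict (Ioi 0))
      (F := fun x (g : ℝ) => Complex.exp (-x * g) * (g : ℂ) ^ (s - 1))
      (F' := fun x (g : ℝ) => Complex.exp (-x * g) * (-(g : ℂ)) * (g : ℂ) ^ (s - 1))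
      (x₀ := z) (bound := fun g : ℝ => Real.exp (-(ε * g)) * g ^ s.re)
      (Metric.ball_mem_nhds z hε0) (Filter.Eventually.of_forall fun x => aux_meas x (s - 1))
      (aux_int_cexp_cpow hz' hs1) ?_ ?_ ?_ ?_
    · exact (key.2.differentiableAt).differentiableWithinAt
    · -- measurability of F' z
      apply ContinuousOn.aestronglyMeasurable _ measurableSet_Ioi
      apply ContinuousOn.mul
      apply ContinuousOn.mul
      · exact (Complex.continuous_exp.comp (continuous_const.mul Complex.continuous_ofReal)).continuousOn
      · exact (Complex.continuous_ofReal.neg).continuousOn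
      · exact fun x hx => (Complex.continuousAt_ofReal_cpow_const x _ (Or.inr (ne_of_gt hx))).continuousWithinAt
    · -- bound
      filter_upwards [self_mem_ae_restrict measurableSet_Ioi] with g hg x hx
      have hg0 : 0 < g := hg
      have hxre : ε ≤ x.re := by
        have : ‖x - z‖ < ε := by simpa [Complex.dist_eq] using hx
        have h2 : |(x - z).re| ≤ ‖x - z‖ := Complex.abs_re_le_norm _
        rw [Complex.sub_re] at h2
        have := abs_le.mp h2
        have : z.re - ε ≤ x.re := by linarith [this.1, le_of_lt ‹‖x-z‖ < ε›]
        linarith [hε0]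
      rw [show Complex.exp (-x * g) * (-(g : ℂ)) * (g : ℂ) ^ (s - 1)
          = Complex.exp (-x * g) * ((-(g : ℂ)) * (g : ℂ) ^ (s - 1)) by ring, norm_mul]
      have e1 : ‖Complex.exp (-x * g)‖ ≤ Real.exp (-(ε * g)) := by
        rw [Complex.norm_exp]
        apply Real.exp_le_exp.mpr
        simp only [neg_re, mul_re, ofReal_re, ofReal_im, mul_zero, sub_zero]
        nlinarith
      have e2 : ‖(-(g:ℂ)) * (g : ℂ) ^ (s - 1)‖ = g ^ s.re := by
        rw [norm_mul, norm_neg, Complex.norm_real, Real.norm_eq_abs,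
          abs_of_pos hg0, Complex.norm_cpow_eq_rpow_re_of_pos hg0, Complex.sub_re, Complex.one_re,
          show s.re = 1 + (s.re - 1) by ring, Real.rpow_add hg0, Real.rpow_one]
        ring_nf
      rw [e2]
      exact mul_le_mul_of_nonneg_right e1 (Real.rpow_nonneg hg0.le _)
    · exact aux_int_rexp_rpow hε0 (by linarith)
    · -- differentiability in x
      filter_upwards [self_mem_ae_restrict measurableSet_Ioi] with g hg x hx
      have h1 : HasDerivAt (fun x : ℂ => -x * (g:ℂ)) (-(g:ℂ)) x := by
        simpa using ((hasDerivAt_id x).neg.mul_const (g : ℂ))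
      exact (h1.cexp).mul_const _
  -- R is differentiable on U
  have hRdiff : DifferentiableOn ℂ R U := by
    intro z hz
    apply DifferentiableAt.differentiableWithinAt
    apply DifferentiableAt.mul_const
    apply DifferentiableAt.cexp
    exact (Complex.differentiableAt_log (Or.inl hz)).const_mul _
  -- equality at positive real points
  have hreal : ∀ r : ℝ, 0 < r → G r = R r := by
    intro r hr
    have base := Complex.integral_cpow_mul_exp_neg_mul_Ioi (a := s) hs hr
    have h1 : G r = (1 / (r:ℂ)) ^ s * Complex.Gamma s := by
      rw [hG, ← base]
      apply setIntegral_congr_fun measurableSet_Ioi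
      intro t ht
      push_cast
      ring_nf
    rw [h1, hR]
    congr 1
    rw [Complex.cpow_def_of_ne_zero (by simpa using (ne_of_gt hr))]
    have : Complex.log (1 / (r:ℂ)) = -Complex.log r := by
      rw [show (1 / (r:ℂ)) = ((1/r : ℝ) : ℂ) by push_cast; ring,
        ← Complex.ofReal_log (by positivity), ← Complex.ofReal_log hr.le, Real.log_div one_ne_zero
          (ne_of_gt hr), Real.log_one]
      push_cast
      ring
    rw [this]
    ring_nf
  -- identity theorem
  have hfreq : ∃ᶠ z in nhdsWithin 1 {(1:ℂ)}ᶜ, G z = R z := by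
    have htend : Tendsto (fun n : ℕ => ((1 + 1/(n+1) : ℝ) : ℂ)) atTop (nhdsWithin 1 {(1:ℂ)}ᶜ) := by
      apply tendsto_nhdsWithin_of_tendsto_nhds_of_eventually_within
      · have : Tendsto (fun n : ℕ => (1 + 1/(n+1) : ℝ)) atTop (nhds 1) := by
          have := tendsto_one_div_add_atTop_nhds_zero_nat (𝕜 := ℝ)
          have h2 := this.const_add (1:ℝ)
          simpa using h2
        have h3 := (Complex.continuous_ofReal.tendsto 1).comp this
        simpa [Function.comp_def] using h3
      · apply Filter.Eventually.of_forall
        intro n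
        simp only [mem_compl_iff, mem_singleton_iff]
        intro h
        have : (1 + 1/(n+1) : ℝ) = 1 := by exact_mod_cast congrArg Complex.re h
        have : (1 : ℝ)/(n+1) = 0 := by linarith
        simp at this
        exact Nat.cast_add_one_ne_zero n this
    apply htend.frequently
    apply Filter.Frequently.of_forall
    intro n
    exact hreal _ (by positivity)
  have heq := (hGdiff.analyticOnNhd hUopen).eqOn_of_preconnected_of_frequently_eq
    (hRdiff.analyticOnNhd hUopen) hUconn (show (1:ℂ) ∈ U by simp [hU]) hfreq
  exact heq hβ


/-- **Subtracted exponential Mellin transform on the strip ⟨-1,0⟩.**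
For `Re β > 0` and `-1 < Re α < 0`, `g ↦ (e^{-βg} - e^{-g}) g^{α-1}` is integrable on `(0,∞)`
and `∫₀^∞ (e^{-βg} - e^{-g}) g^{α-1} dg = Γ(α) (β^{-α} - 1)`,
where `β^{-α} = exp (-α Log β)`. -/
theorem mellin_sub_exp (β α : ℂ) (hβ : 0 < β.re) (hm1 : -1 < α.re) (h0 : α.re < 0) :
    IntegrableOn
      (fun g : ℝ => (Complex.exp (-β * g) - Complex.exp (-(g : ℂ))) * (g : ℂ) ^ (α - 1))
      (Ioi 0) ∧
    ∫ g in Ioi (0 : ℝ), (Complex.exp (-β * g) - Complex.exp (-(g : ℂ))) * (g : ℂ) ^ (α - 1) =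
      Complex.Gamma α * (Complex.exp (-α * Complex.log β) - 1) := by
  have hα0 : α ≠ 0 := fun h => by simp [h] at h0
  have hβ0 : β ≠ 0 := fun h => by simp [h] at hβ
  refine ⟨aux_int_main hβ hm1 h0, ?_⟩
  set f : ℝ → ℂ := fun g => (Complex.exp (-β * g) - Complex.exp (-(g : ℂ))) * (g : ℂ) ^ α with hf
  set u : ℝ → ℂ := fun g =>
    (Complex.exp (-β * g) * (-β) - Complex.exp (-(g : ℂ)) * (-1)) * (g : ℂ) ^ α with hu
  set v : ℝ → ℂ := fun g =>
    (Complex.exp (-β * g) - Complex.exp (-(g : ℂ))) * (α * (g : ℂ) ^ (α - 1)) with hv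
  -- derivative
  have hderiv : ∀ g : ℝ, 0 < g → HasDerivAt f (u g + v g) g := by
    intro g hg
    have h1 : HasDerivAt (fun y : ℝ => Complex.exp (-β * y))
        (Complex.exp (-β * g) * (-β)) g := by
      have : HasDerivAt (fun z : ℂ => Complex.exp (-β * z)) (Complex.exp (-β * g) * (-β)) g := by
        simpa using ((hasDerivAt_id (g:ℂ)).const_mul (-β)).cexp
      exact this.comp_ofReal
    have h2 : HasDerivAt (fun y : ℝ => Complex.exp (-(y : ℂ)))
        (Complex.exp (-(g : ℂ)) * (-1)) g := by
      have : HasDerivAt (fun z : ℂ => Complex.exp (-z)) (Complex.exp (-(g : ℂ)) * (-1)) g := by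
        simpa using (hasDerivAt_id ((g:ℝ):ℂ)).neg.cexp
      exact this.comp_ofReal
    have h3 : HasDerivAt (fun y : ℝ => (y : ℂ) ^ α) (α * (g : ℂ) ^ (α - 1)) g := by
      have hr : α - 1 ≠ -1 := by
        intro h; apply hα0; linear_combination h
      have h4 := (hasDerivAt_ofReal_cpow_const' (ne_of_gt hg) hr).const_mul α
      simp only [sub_add_cancel] at h4
      have heq : (fun y : ℝ => α * ((y:ℂ) ^ α / α)) = fun y : ℝ => (y:ℂ) ^ α := by
        funext y; field_simp
      rwa [heq] at h4
    exact (h1.sub h2).mul h3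
  -- integrability of u and v
  have hu_int : IntegrableOn u (Ioi 0) := by
    have i1 := (aux_int_cexp_cpow hβ (s := α) hm1).const_mul (-β)
    have i2 : IntegrableOn (fun g : ℝ => Complex.exp (-(g:ℂ)) * (g:ℂ) ^ α) (Ioi 0) := by
      simpa [neg_one_mul] using aux_int_cexp_cpow (β := 1) (by norm_num) (s := α) hm1
    have i12 : IntegrableOn (fun g : ℝ =>
        -β * (Complex.exp (-β * g) * (g:ℂ) ^ α) + Complex.exp (-(g:ℂ)) * (g:ℂ) ^ α) (Ioi 0) :=
      i1.add i2
    have e : u = fun g : ℝ =>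
        -β * (Complex.exp (-β * g) * (g:ℂ) ^ α) + Complex.exp (-(g:ℂ)) * (g:ℂ) ^ α := by
      funext g; simp only [hu]; ring
    rw [e]; exact i12
  have hv_int : IntegrableOn v (Ioi 0) := by
    have h8 := (aux_int_main hβ hm1 h0).const_mul α
    have e : v = fun g : ℝ =>
        α * ((Complex.exp (-β * g) - Complex.exp (-(g : ℂ))) * (g : ℂ) ^ (α - 1)) := by
      funext g; simp only [hv]; ring
    rw [e]; exact h8
  have huv_int : IntegrableOn (fun g => u g + v g) (Ioi 0) := hu_int.add hv_int
  -- limit at infinity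
  have htop : Tendsto f atTop (nhds 0) := by
    set c : ℝ := min β.re 1 with hc
    have hc0 : 0 < c := lt_min hβ one_pos
    have hbound : ∀ᶠ g : ℝ in atTop, ‖f g‖ ≤ 2 * Real.exp (-(c * g)) := by
      filter_upwards [eventually_ge_atTop (1:ℝ)] with g hg
      have hg0 : 0 < g := lt_of_lt_of_le one_pos hg
      rw [hf, norm_mul]
      have e1 : ‖Complex.exp (-β * g) - Complex.exp (-(g:ℂ))‖ ≤ 2 * Real.exp (-(c * g)) := by
        refine (norm_sub_le _ _).trans ?_
        rw [Complex.norm_exp, Complex.norm_exp]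
        have e11 : Real.exp ((-β * g).re) ≤ Real.exp (-(c * g)) := by
          apply Real.exp_le_exp.mpr
          simp only [neg_re, mul_re, ofReal_re, ofReal_im, mul_zero, sub_zero]
          nlinarith [min_le_left β.re 1]
        have e12 : Real.exp ((-(g:ℂ)).re) ≤ Real.exp (-(c * g)) := by
          apply Real.exp_le_exp.mpr
          simp only [neg_re, ofReal_re]
          nlinarith [min_le_right β.re 1]
        linarith
      have e2 : ‖(g : ℂ) ^ α‖ ≤ 1 := by
        rw [Complex.norm_cpow_eq_rpow_re_of_pos hg0]
        calc g ^ α.re ≤ g ^ (0:ℝ) := Real.rpow_le_rpow_of_exponent_le hg h0.le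
          _ = 1 := Real.rpow_zero g
      calc ‖Complex.exp (-β * g) - Complex.exp (-(g:ℂ))‖ * ‖(g : ℂ) ^ α‖
          ≤ (2 * Real.exp (-(c * g))) * 1 := mul_le_mul e1 e2 (norm_nonneg _) (by positivity)
        _ = 2 * Real.exp (-(c * g)) := by ring
    apply squeeze_zero_norm' hbound
    have h5 : Tendsto (fun g : ℝ => -(c * g)) atTop atBot := by
      apply Filter.tendsto_neg_atTop_atBot.comp
      exact (tendsto_id.const_mul_atTop hc0)
    have h9 : Tendsto (fun g : ℝ => Real.exp (-(c * g))) atTop (nhds 0) :=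
      Real.tendsto_exp_atBot.comp h5
    simpa using h9.const_mul 2
  -- limit at 0 within Icc 0 1
  set A := ‖1 - β‖ with hA
  have hA0 : (0:ℝ) ≤ A := norm_nonneg _
  have hf00 : f 0 = 0 := by simp [hf]
  have hzero : ContinuousWithinAt f (Icc 0 1) 0 := by
    rw [ContinuousWithinAt, hf00]
    have hev : ∀ᶠ g in nhdsWithin (0:ℝ) (Icc 0 1), ‖f g‖ ≤ 2 * A * g ^ (α.re + 1) := by
      have hev1 : ∀ᶠ g : ℝ in nhds 0, |g - 0| < 1 / (A + 1) :=
        eventually_abs_sub_lt 0 (by positivity)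
      filter_upwards [hev1.filter_mono nhdsWithin_le_nhds,
        self_mem_nhdsWithin] with g hg1 hg2
      rcases eq_or_lt_of_le hg2.1 with h | hgpos
      · rw [← h, hf00]
        simp [Real.zero_rpow (by linarith : α.re + 1 ≠ 0)]
      · have hgA : A * g ≤ 1 := by
          rw [sub_zero, abs_of_pos hgpos] at hg1
          have h7 : g * (A + 1) < 1 := (lt_div_iff₀ (by positivity)).mp hg1
          nlinarith
        rw [hf, norm_mul]
        have e2 : ‖(g : ℂ) ^ α‖ = g ^ α.re := by
          rw [Complex.norm_cpow_eq_rpow_re_of_pos hgpos]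
        calc ‖Complex.exp (-β * g) - Complex.exp (-(g:ℂ))‖ * ‖(g : ℂ) ^ α‖
            ≤ (2 * A * g) * g ^ α.re := by
              rw [e2]
              exact mul_le_mul_of_nonneg_right (aux_norm_diff_small hgpos hgA)
                (Real.rpow_nonneg hgpos.le _)
          _ = 2 * A * g ^ (α.re + 1) := by
              rw [Real.rpow_add hgpos, Real.rpow_one]; ring
    apply squeeze_zero_norm' hev
    have h6 : Tendsto (fun g : ℝ => g ^ (α.re + 1)) (nhds 0) (nhds 0) := by
      have := (Real.continuousAt_rpow_const 0 (α.re + 1) (Or.inr (by linarith))).tendsto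
      simpa [Real.zero_rpow (by linarith : α.re + 1 ≠ 0)] using this
    have h6' := (h6.const_mul (2 * A)).mono_left
      (nhdsWithin_le_nhds (s := Icc (0:ℝ) 1))
    simpa using h6'
  -- continuity on [0,1] and within Ici 1
  have hcont01 : ContinuousOn f (Icc 0 1) := by
    intro x hx
    rcases eq_or_lt_of_le hx.1 with h | hxpos
    · rw [← h]; exact hzero
    · exact ((hderiv x hxpos).continuousAt).continuousWithinAt
  -- FTC on (0,1]
  have hFTC1 : ∫ g in Ioc (0:ℝ) 1, (u g + v g) = f 1 := by
    have := intervalIntegral.integral_eq_sub_of_hasDeriv_right_of_le (f := f)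
      (f' := fun g => u g + v g) zero_le_one hcont01
      (fun x hx => ((hderiv x hx.1).hasDerivWithinAt))
      ?_
    · rw [intervalIntegral.integral_of_le zero_le_one] at this
      rw [this, hf00, sub_zero]
    · rw [intervalIntegrable_iff_integrableOn_Ioc_of_le zero_le_one]
      exact huv_int.mono_set Ioc_subset_Ioi_self
  -- FTC on [1, ∞)
  have hFTC2 : ∫ g in Ioi (1:ℝ), (u g + v g) = 0 - f 1 := by
    apply integral_Ioi_of_hasDerivAt_of_tendsto
      ((hderiv 1 one_pos).continuousAt).continuousWithinAt
      (fun x hx => hderiv x (lt_trans one_pos hx))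
      (huv_int.mono_set (fun x hx => mem_Ioi.mpr (lt_trans one_pos hx))) htop
  -- total integral of derivative is 0
  have hsplit : ∫ g in Ioi (0:ℝ), (u g + v g) = 0 := by
    rw [← Ioc_union_Ioi_eq_Ioi zero_le_one,
      setIntegral_union Ioc_disjoint_Ioi_same measurableSet_Ioi
        (huv_int.mono_set Ioc_subset_Ioi_self)
        (huv_int.mono_set (fun x hx => mem_Ioi.mpr (lt_trans one_pos hx))),
      hFTC1, hFTC2]
    ring
  rw [integral_add (hu_int.mono_set subset_rfl) (hv_int.mono_set subset_rfl)] at hsplit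
  -- compute ∫ u
  have hIβ : ∫ g in Ioi (0:ℝ), Complex.exp (-β * g) * (g : ℂ) ^ α =
      Complex.exp (-(α+1) * Complex.log β) * Complex.Gamma (α+1) := by
    have := aux_cexp_gamma hβ (s := α + 1) (by simp [Complex.add_re]; linarith)
    simpa using this
  have hI1 : ∫ g in Ioi (0:ℝ), Complex.exp (-(g:ℂ)) * (g : ℂ) ^ α =
      Complex.Gamma (α+1) := by
    have := aux_cexp_gamma (β := 1) (by norm_num) (s := α + 1)
      (by simp [Complex.add_re]; linarith)
    simp only [Complex.log_one, mul_zero, Complex.exp_zero, one_mul, add_sub_cancel_right] at this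
    rw [← this]
    apply setIntegral_congr_fun measurableSet_Ioi
    intro x hx
    norm_num
  have hu_val : ∫ g in Ioi (0:ℝ), u g =
      -β * (Complex.exp (-(α+1) * Complex.log β) * Complex.Gamma (α+1)) +
        Complex.Gamma (α+1) := by
    have e : ∀ g : ℝ, u g = -β * (Complex.exp (-β * g) * (g:ℂ) ^ α) +
        Complex.exp (-(g:ℂ)) * (g:ℂ) ^ α := by
      intro g; simp only [hu]; ring
    simp_rw [e]
    rw [integral_add ((aux_int_cexp_cpow hβ hm1).const_mul (-β))
      (by simpa [IntegrableOn] using aux_int_cexp_cpow (β := 1) (by norm_num) (s := α) hm1),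
      integral_const_mul, hIβ, hI1]
  have hv_val : ∫ g in Ioi (0:ℝ), v g =
      α * ∫ g in Ioi (0:ℝ),
        (Complex.exp (-β * g) - Complex.exp (-(g : ℂ))) * (g : ℂ) ^ (α - 1) := by
    have e : ∀ g : ℝ, v g =
        α * ((Complex.exp (-β * g) - Complex.exp (-(g : ℂ))) * (g : ℂ) ^ (α - 1)) := by
      intro g; simp only [hv]; ring
    simp_rw [e]
    rw [integral_const_mul]
  rw [hu_val, hv_val] at hsplit
  -- final algebra
  have hGamma : Complex.Gamma (α + 1) = α * Complex.Gamma α := Complex.Gamma_add_one α hα0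
  have hexp : β * Complex.exp (-(α+1) * Complex.log β) = Complex.exp (-α * Complex.log β) := by
    nth_rewrite 1 [← Complex.exp_log hβ0]
    rw [← Complex.exp_add]
    congr 1
    ring
  apply mul_left_cancel₀ hα0
  have : α * ∫ g in Ioi (0:ℝ),
      (Complex.exp (-β * g) - Complex.exp (-(g : ℂ))) * (g : ℂ) ^ (α - 1) =
      β * Complex.exp (-(α+1) * Complex.log β) * Complex.Gamma (α+1) - Complex.Gamma (α+1) := by
    linear_combination hsplit
  rw [this, hexp, hGamma]
  ring
end

section
/- Let β ∈ ℂ with Re β > 0. Then g ↦ (e^{−βg} − e^{−g})/g is integrable on (0,∞) and ∫₀^∞ (e^{−βg} − e^{−g}) g^{−1} dg = −Log β, where Log is the principal branch of the complex logarithm. -/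
open MeasureTheory Set Filter Complex

section Aux

variable (β : ℂ)

/-- The exponential kernel appearing in the Frullani representation. -/
private noncomputable def E (g s : ℝ) : ℂ := Complex.exp ((-(β - 1) * g) * s - g)

private lemma E_eq (g s : ℝ) : E β g s = Complex.exp (-(1 + s * (β - 1)) * g) := by
  unfold E; ring_nf

private lemma norm_E_le {c : ℝ} (hc1 : c ≤ 1) (hcβ : c ≤ β.re) {g s : ℝ}
    (hg : 0 ≤ g) (hs0 : 0 ≤ s) (hs1 : s ≤ 1) :
    ‖E β g s‖ ≤ Real.exp (-c * g) := by
  rw [E, Complex.norm_exp, Real.exp_le_exp]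
  have : ((-(β - 1) * g) * s - g).re = -((1 + s * (β.re - 1)) * g) := by
    simp [Complex.sub_re, Complex.mul_re, Complex.ofReal_re, Complex.ofReal_im]
    ring
  rw [this]
  have h1 : c ≤ 1 + s * (β.re - 1) := by
    rcases le_or_gt 1 β.re with h | h
    · nlinarith
    · nlinarith
  nlinarith

private lemma continuous_E : Continuous fun p : ℝ × ℝ => E β p.1 p.2 := by
  unfold E
  fun_prop

/-- Frullani representation of the integrand. -/
private lemma rep {g : ℝ} (hg : 0 < g) :
    (Complex.exp (-β * g) - Complex.exp (-(g : ℂ))) / (g : ℂ) =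
      -(β - 1) * ∫ s in (0 : ℝ)..1, E β g s := by
  have key : ∀ s : ℝ, HasDerivAt (fun s : ℝ => Complex.exp ((-(β - 1) * g) * s - g))
      ((-(β - 1) * g) * Complex.exp ((-(β - 1) * g) * s - g)) s := by
    intro s
    have h1 : HasDerivAt (fun z : ℂ => Complex.exp ((-(β - 1) * g) * z - g))
        (Complex.exp ((-(β - 1) * g) * s - g) * (-(β - 1) * g)) (s : ℂ) := by
      simpa using (((hasDerivAt_id (s : ℂ)).const_mul (-(β - 1) * (g : ℂ))).sub_const
        (g : ℂ)).cexp
    have := h1.comp_ofReal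
    simpa [mul_comm] using this
  have hint : ∫ s in (0 : ℝ)..1, (-(β - 1) * g) * Complex.exp ((-(β - 1) * g) * s - g) =
      Complex.exp ((-(β - 1) * g) * 1 - g) - Complex.exp ((-(β - 1) * g) * 0 - g) := by
    refine intervalIntegral.integral_eq_sub_of_hasDerivAt (fun s _ => key s) ?_
    apply Continuous.intervalIntegrable
    fun_prop
  have hend : Complex.exp ((-(β - 1) * g) * 1 - g) - Complex.exp ((-(β - 1) * g) * 0 - g) =
      Complex.exp (-β * g) - Complex.exp (-(g : ℂ)) := by
    congr 1 <;> congr 1 <;> ring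
  rw [intervalIntegral.integral_const_mul] at hint
  have hgne : (g : ℂ) ≠ 0 := by exact_mod_cast hg.ne'
  unfold E
  rw [← hend, ← hint]
  field_simp

end Aux

/-- **Frullani-type integral for the logarithm.**
For `β : ℂ` with `Re β > 0`, `g ↦ (e^{-βg} - e^{-g})/g` is integrable on `(0,∞)` and
`∫₀^∞ (e^{-βg} - e^{-g}) g^{-1} dg = - Log β`, with `Log` the principal complex logarithm. -/
theorem integral_sub_exp_div_eq_neg_log (β : ℂ) (hβ : 0 < β.re) :
    IntegrableOn (fun g : ℝ => (Complex.exp (-β * g) - Complex.exp (-(g : ℂ))) / (g : ℂ))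
      (Ioi 0) ∧
    ∫ g in Ioi (0 : ℝ), (Complex.exp (-β * g) - Complex.exp (-(g : ℂ))) / (g : ℂ) =
      -Complex.log β := by
  set c : ℝ := min 1 β.re with hc_def
  have hc : 0 < c := lt_min one_pos hβ
  have hc1 : c ≤ 1 := min_le_left _ _
  have hcβ : c ≤ β.re := min_le_right _ _
  -- Integrability of the main integrand
  have hbound : ∀ g ∈ Ioi (0 : ℝ),
      ‖(Complex.exp (-β * g) - Complex.exp (-(g : ℂ))) / (g : ℂ)‖ ≤
        ‖β - 1‖ * Real.exp (-c * g) := by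
    intro g hg
    rw [rep β hg]
    rw [norm_mul, norm_neg]
    gcongr
    have := intervalIntegral.norm_integral_le_of_norm_le_const
      (a := (0:ℝ)) (b := 1) (C := Real.exp (-c * g)) (f := fun s => E β g s) ?_
    · simpa using this
    · intro s hs
      rw [uIoc_of_le (by norm_num)] at hs
      exact norm_E_le β hc1 hcβ (le_of_lt hg) hs.1.le hs.2
  have hmeas : AEStronglyMeasurable
      (fun g : ℝ => (Complex.exp (-β * g) - Complex.exp (-(g : ℂ))) / (g : ℂ))
      (volume.restrict (Ioi 0)) := by
    apply ContinuousOn.aestronglyMeasurable _ measurableSet_Ioi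
    apply ContinuousOn.div
    · fun_prop
    · fun_prop
    · intro g hg
      exact_mod_cast (ne_of_gt (hg : (0:ℝ) < g))
  have hdom : IntegrableOn (fun g : ℝ => ‖β - 1‖ * Real.exp (-c * g)) (Ioi 0) :=
    (exp_neg_integrableOn_Ioi 0 hc).const_mul _
  have hInt : IntegrableOn
      (fun g : ℝ => (Complex.exp (-β * g) - Complex.exp (-(g : ℂ))) / (g : ℂ)) (Ioi 0) := by
    refine Integrable.mono' hdom hmeas ?_
    exact (ae_restrict_iff' measurableSet_Ioi).2 (.of_forall hbound)
  refine ⟨hInt, ?_⟩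
  by_cases hβ1 : β = 1
  · simp [hβ1]
  have hβ1' : β - 1 ≠ 0 := sub_ne_zero.2 hβ1
  -- rewrite integrand using the representation
  have step1 : ∫ g in Ioi (0 : ℝ), (Complex.exp (-β * g) - Complex.exp (-(g : ℂ))) / (g : ℂ) =
      -(β - 1) * ∫ g in Ioi (0 : ℝ), ∫ s in Ioc (0:ℝ) 1, E β g s := by
    rw [← integral_const_mul]
    refine setIntegral_congr_fun measurableSet_Ioi (fun g hg => ?_)
    rw [rep β hg, intervalIntegral.integral_of_le (by norm_num)]
  -- product integrability for Fubini
  have hprod : Integrable (Function.uncurry fun g s => E β g s)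
      ((volume.restrict (Ioi (0:ℝ))).prod (volume.restrict (Ioc (0:ℝ) 1))) := by
    have hm : AEStronglyMeasurable (Function.uncurry fun g s => E β g s)
        ((volume.restrict (Ioi (0:ℝ))).prod (volume.restrict (Ioc (0:ℝ) 1))) :=
      (continuous_E β).aestronglyMeasurable
    refine Integrable.mono' (g := fun p : ℝ × ℝ => Real.exp (-c * p.1) * 1) ?_ hm ?_
    · exact Integrable.mul_prod (exp_neg_integrableOn_Ioi 0 hc)
        (integrable_const _)
    · rw [Measure.prod_restrict]
      refine (ae_restrict_iff' (measurableSet_Ioi.prod measurableSet_Ioc)).2 ?_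
      refine Filter.Eventually.of_forall (fun p hp => ?_)
      obtain ⟨hp1, hp2⟩ := hp
      simpa [Function.uncurry] using norm_E_le β hc1 hcβ (le_of_lt hp1) hp2.1.le hp2.2
  have step2 : ∫ g in Ioi (0 : ℝ), ∫ s in Ioc (0:ℝ) 1, E β g s =
      ∫ s in Ioc (0:ℝ) 1, ∫ g in Ioi (0:ℝ), E β g s := integral_integral_swap hprod
  -- inner integral evaluation
  have inner : ∀ s ∈ Ioc (0:ℝ) 1, ∫ g in Ioi (0:ℝ), E β g s = (1 + s * (β - 1))⁻¹ := by
    intro s hs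
    set a : ℂ := 1 + s * (β - 1) with ha_def
    have hare : c ≤ a.re := by
      have : a.re = 1 + s * (β.re - 1) := by
        simp [ha_def, Complex.add_re, Complex.mul_re]
      rw [this]
      rcases le_or_gt 1 β.re with h | h
      · nlinarith [hs.1.le, hs.2]
      · nlinarith [hs.1.le, hs.2]
    have hane : a ≠ 0 := by
      intro h
      rw [h] at hare
      simp at hare
      linarith
    have hderiv : ∀ g ∈ Ici (0:ℝ),
        HasDerivAt (fun g : ℝ => -Complex.exp (-a * g) / a) (E β g s) g := by
      intro g _
      have h1 : HasDerivAt (fun z : ℂ => -Complex.exp (-a * z) / a)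
          (-(Complex.exp (-a * g) * (-a)) / a) (g : ℂ) := by
        simpa using (((((hasDerivAt_id (g : ℂ)).const_mul (-a)).cexp)).neg).div_const a
      have h2 := h1.comp_ofReal
      have : -(Complex.exp (-a * g) * (-a)) / a = E β g s := by
        rw [E_eq, ← ha_def]
        field_simp
      rwa [this] at h2
    have hintE : IntegrableOn (fun g : ℝ => E β g s) (Ioi 0) := by
      refine Integrable.mono' (exp_neg_integrableOn_Ioi 0 hc) ?_ ?_
      · exact ((continuous_E β).comp (by fun_prop : Continuous fun g : ℝ =>
          ((g, s) : ℝ × ℝ))).aestronglyMeasurable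
      · refine (ae_restrict_iff' measurableSet_Ioi).2 (.of_forall fun g hg => ?_)
        exact norm_E_le β hc1 hcβ (le_of_lt hg) hs.1.le hs.2
    have htend : Tendsto (fun g : ℝ => -Complex.exp (-a * g) / a) atTop (nhds 0) := by
      have : Tendsto (fun g : ℝ => ‖-Complex.exp (-a * g) / a‖) atTop (nhds 0) := by
        have heq : ∀ g : ℝ, ‖-Complex.exp (-a * g) / a‖ = Real.exp (-a.re * g) / ‖a‖ := by
          intro g
          rw [norm_div, norm_neg, Complex.norm_exp]
          congr 2
          simp [Complex.mul_re]
        simp_rw [heq]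
        have h0 : Tendsto (fun g : ℝ => Real.exp (-a.re * g)) atTop (nhds 0) := by
          apply Real.tendsto_exp_atBot.comp
          apply Tendsto.const_mul_atTop_of_neg (by linarith : -a.re < 0) tendsto_id
        simpa using h0.div_const ‖a‖
      rw [tendsto_zero_iff_norm_tendsto_zero]
      exact this
    have := integral_Ioi_of_hasDerivAt_of_tendsto' hderiv hintE htend
    rw [this]
    simp only [Complex.ofReal_zero, mul_zero, Complex.exp_zero, zero_sub, neg_div, neg_neg]
    field_simp
  have step3 : ∫ s in Ioc (0:ℝ) 1, ∫ g in Ioi (0:ℝ), E β g s =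
      ∫ s in Ioc (0:ℝ) 1, (1 + s * (β - 1))⁻¹ :=
    setIntegral_congr_fun measurableSet_Ioc inner
  -- evaluate the outer integral via FTC
  have hγre : ∀ s ∈ Icc (0:ℝ) 1, c ≤ (1 + (s:ℂ) * (β - 1)).re := by
    intro s hs
    have : (1 + (s:ℂ) * (β - 1)).re = 1 + s * (β.re - 1) := by
      simp [Complex.add_re, Complex.mul_re]
    rw [this]
    rcases le_or_gt 1 β.re with h | h
    · nlinarith [hs.1, hs.2]
    · nlinarith [hs.1, hs.2]
  have hγne : ∀ s ∈ Icc (0:ℝ) 1, (1 + (s:ℂ) * (β - 1)) ≠ 0 := by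
    intro s hs h
    have := hγre s hs
    rw [h] at this
    simp at this
    linarith
  have hγcont : ContinuousOn (fun s : ℝ => (1 + (s:ℂ) * (β - 1))⁻¹) (Icc 0 1) := by
    apply ContinuousOn.inv₀
    · fun_prop
    · exact hγne
  have hlog : ∫ s in (0:ℝ)..1, (1 + (s:ℂ) * (β - 1))⁻¹ * (β - 1) =
      Complex.log (1 + ((1:ℝ):ℂ) * (β - 1)) - Complex.log (1 + ((0:ℝ):ℂ) * (β - 1)) := by
    refine intervalIntegral.integral_eq_sub_of_hasDerivAt
      (f := fun s : ℝ => Complex.log (1 + (s:ℂ) * (β - 1))) (fun s hs => ?_) ?_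
    · rw [uIcc_of_le (by norm_num)] at hs
      have hmem : (1 + (s:ℂ) * (β - 1)) ∈ Complex.slitPlane := by
        rw [Complex.mem_slitPlane_iff]
        left
        linarith [hγre s hs]
      have hin : HasDerivAt (fun z : ℂ => Complex.log (1 + z * (β - 1)))
          ((1 + (s:ℂ) * (β - 1))⁻¹ * (β - 1)) (s : ℂ) := by
        have h1 : HasDerivAt (fun z : ℂ => 1 + z * (β - 1)) (β - 1) (s : ℂ) := by
          simpa using ((hasDerivAt_id ((s:ℝ):ℂ)).mul_const (β - 1)).const_add 1
        exact (Complex.hasDerivAt_log hmem).comp (s : ℂ) h1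
      exact hin.comp_ofReal
    · apply ContinuousOn.intervalIntegrable
      rw [uIcc_of_le (by norm_num)]
      exact hγcont.mul continuousOn_const
  have hlog' : (∫ s in (0:ℝ)..1, (1 + (s:ℂ) * (β - 1))⁻¹) * (β - 1) = Complex.log β := by
    rw [← intervalIntegral.integral_mul_const, hlog]
    simp
  rw [step1, step2, step3, ← intervalIntegral.integral_of_le (by norm_num : (0:ℝ) ≤ 1)]
  have : (∫ s in (0:ℝ)..1, (1 + (s:ℂ) * (β - 1))⁻¹) = Complex.log β / (β - 1) := by
    rw [← hlog']
    field_simp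
    congr 1
    funext s
    ring
  rw [this]
  field_simp
end

section
/- Let α ∈ ℂ with σ = Re α, and let f, g : (0,∞) → ℂ be measurable with x ↦ |f(x)| x^{σ−1} and x ↦ |g(x)| x^{−σ} integrable on (0,∞). Then the iterated integral ∫₀^∞ ∫₀^∞ f(xy) g(y) x^{α−1} dy dx converges absolutely and equals f̃(α) · g̃(1−α), the product of the Mellin transform of f at α and the Mellin transform of g at 1−α. -/
open MeasureTheory Set
open Complex

lemma measurable_ofReal_cpow (c : ℂ) : Measurable fun x : ℝ => (x : ℂ) ^ c := by
  have h : (fun x : ℝ => (x : ℂ) ^ c) = fun x : ℝ =>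
      if (x : ℂ) = 0 then (if c = 0 then 1 else 0) else Complex.exp (Complex.log x * c) := by
    funext x; rw [Complex.cpow_def]
  rw [h]
  exact Measurable.ite (Complex.measurable_ofReal (measurableSet_singleton 0))
    measurable_const
    (Complex.measurable_exp.comp ((Complex.measurable_log.comp Complex.measurable_ofReal).mul_const c))

lemma inner_shift_eq (α : ℂ) (h : ℝ → ℂ) {y : ℝ} (hy : 0 < y) :
    ∫ x in Ioi (0:ℝ), h (x * y) * (x:ℂ) ^ (α - 1) =
      (y:ℂ) ^ (-α) * ∫ u in Ioi (0:ℝ), h u * (u:ℂ) ^ (α - 1) := by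
  have hy0 : (y:ℂ) ≠ 0 := ofReal_ne_zero.mpr hy.ne'
  have step : ∀ x ∈ Ioi (0:ℝ), h (x * y) * (x:ℂ) ^ (α - 1)
      = (y:ℂ) ^ (1 - α) • ((fun u : ℝ => h u * (u:ℂ) ^ (α - 1)) (x * y)) := by
    intro x hx
    have hx0 : (0:ℝ) < x := hx
    simp only [smul_eq_mul]
    rw [Complex.ofReal_mul, mul_cpow_ofReal_nonneg hx0.le hy.le]
    have : (y:ℂ) ^ (1 - α) * (y:ℂ) ^ (α - 1) = 1 := by
      rw [← cpow_add _ _ hy0]; ring_nf; exact cpow_zero _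
    calc h (x * y) * (x:ℂ) ^ (α - 1)
        = h (x * y) * (x:ℂ) ^ (α - 1) * ((y:ℂ) ^ (1 - α) * (y:ℂ) ^ (α - 1)) := by
          rw [this, mul_one]
      _ = (y:ℂ) ^ (1 - α) * (h (x * y) * ((x:ℂ) ^ (α - 1) * (y:ℂ) ^ (α - 1))) := by ring
  rw [setIntegral_congr_fun measurableSet_Ioi step, integral_smul,
    integral_comp_mul_right_Ioi (fun u : ℝ => h u * (u:ℂ) ^ (α - 1)) 0 hy, zero_mul]
  rw [smul_comm, Complex.real_smul, smul_eq_mul, Complex.ofReal_inv, ← cpow_neg_one,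
    ← mul_assoc, ← cpow_add _ _ hy0]
  rw [show (-1 : ℂ) + (1 - α) = -α by ring]

lemma inner_shift_int (α : ℂ) (h : ℝ → ℂ) {y : ℝ} (hy : 0 < y)
    (hI : IntegrableOn (fun u : ℝ => h u * (u:ℂ) ^ (α - 1)) (Ioi 0)) :
    IntegrableOn (fun x : ℝ => h (x * y) * (x:ℂ) ^ (α - 1)) (Ioi 0) := by
  have h1 : IntegrableOn (fun x : ℝ => (fun u : ℝ => h u * (u:ℂ) ^ (α - 1)) (x * y)) (Ioi 0) :=
    (integrableOn_Ioi_comp_mul_right_iff (fun u : ℝ => h u * (u:ℂ) ^ (α - 1)) 0 hy).mpr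
      (by rwa [zero_mul])
  have h2 := h1.smul ((y:ℂ) ^ (1 - α))
  refine (integrableOn_congr_fun (fun x hx => ?_) measurableSet_Ioi).mpr h2
  have hy0 : (y:ℂ) ≠ 0 := ofReal_ne_zero.mpr hy.ne'
  have hx0 : (0:ℝ) < x := hx
  simp only [Pi.smul_apply, smul_eq_mul]
  rw [Complex.ofReal_mul, mul_cpow_ofReal_nonneg hx0.le hy.le]
  have : (y:ℂ) ^ (1 - α) * (y:ℂ) ^ (α - 1) = 1 := by
    rw [← cpow_add _ _ hy0]; ring_nf; exact cpow_zero _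
  calc h (x * y) * (x:ℂ) ^ (α - 1)
      = h (x * y) * (x:ℂ) ^ (α - 1) * ((y:ℂ) ^ (1 - α) * (y:ℂ) ^ (α - 1)) := by
        rw [this, mul_one]
    _ = (y:ℂ) ^ (1 - α) * (h (x * y) * ((x:ℂ) ^ (α - 1) * (y:ℂ) ^ (α - 1))) := by ring

lemma inner_shift_eq_real (σ : ℝ) (h : ℝ → ℝ) {y : ℝ} (hy : 0 < y) :
    ∫ x in Ioi (0:ℝ), h (x * y) * x ^ (σ - 1) =
      y ^ (-σ) * ∫ u in Ioi (0:ℝ), h u * u ^ (σ - 1) := by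
  have step : ∀ x ∈ Ioi (0:ℝ), h (x * y) * x ^ (σ - 1)
      = y ^ (1 - σ) • ((fun u : ℝ => h u * u ^ (σ - 1)) (x * y)) := by
    intro x hx
    have hx0 : (0:ℝ) < x := hx
    simp only [smul_eq_mul]
    rw [Real.mul_rpow hx0.le hy.le]
    have : y ^ (1 - σ) * y ^ (σ - 1) = 1 := by
      rw [← Real.rpow_add hy]; ring_nf; exact Real.rpow_zero _
    calc h (x * y) * x ^ (σ - 1)
        = h (x * y) * x ^ (σ - 1) * (y ^ (1 - σ) * y ^ (σ - 1)) := by rw [this, mul_one]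
      _ = y ^ (1 - σ) * (h (x * y) * (x ^ (σ - 1) * y ^ (σ - 1))) := by ring
  rw [setIntegral_congr_fun measurableSet_Ioi step, integral_smul,
    integral_comp_mul_right_Ioi (fun u : ℝ => h u * u ^ (σ - 1)) 0 hy, zero_mul]
  rw [smul_eq_mul, smul_eq_mul, ← mul_assoc, mul_comm (y ^ (1 - σ)) y⁻¹, ← Real.rpow_neg_one y, ← Real.rpow_add hy]
  rw [show -1 + (1 - σ) = -σ by ring]

/-- **Mellin transform of the ⋆-convolution.**
Let `σ = Re α` and let `f, g : (0,∞) → ℂ` be measurable with `x ↦ |f x| x^{σ-1}` and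
`x ↦ |g x| x^{-σ}` integrable on `(0,∞)`. Then the iterated integral
`∫₀^∞ ∫₀^∞ f(xy) g(y) x^{α-1} dy dx` converges absolutely and equals
`f̃(α) · g̃(1-α)`. -/
theorem mellin_star_convolution (α : ℂ) (f g : ℝ → ℂ)
    (hfm : Measurable f) (hgm : Measurable g)
    (hf : IntegrableOn (fun x : ℝ => ‖f x‖ * x ^ (α.re - 1)) (Ioi 0))
    (hg : IntegrableOn (fun x : ℝ => ‖g x‖ * x ^ (-α.re)) (Ioi 0)) :
    IntegrableOn (fun p : ℝ × ℝ => f (p.1 * p.2) * g p.2 * (p.1 : ℂ) ^ (α - 1))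
      (Ioi (0 : ℝ) ×ˢ Ioi (0 : ℝ)) ∧
    ∫ x in Ioi (0 : ℝ), ∫ y in Ioi (0 : ℝ), f (x * y) * g y * (x : ℂ) ^ (α - 1) =
      (∫ x in Ioi (0 : ℝ), f x * (x : ℂ) ^ (α - 1)) *
        ∫ x in Ioi (0 : ℝ), g x * (x : ℂ) ^ ((1 - α) - 1) := by
  set σ := α.re with hσ
  have hcm : Measurable fun x : ℝ => (x:ℂ) ^ (α - 1) := measurable_ofReal_cpow _
  -- integrability of f u * u^(α-1)
  have hfI : IntegrableOn (fun u : ℝ => f u * (u:ℂ) ^ (α - 1)) (Ioi 0) := by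
    refine Integrable.mono' hf (hfm.mul hcm).aestronglyMeasurable ?_
    filter_upwards [ae_restrict_mem measurableSet_Ioi] with x hx
    have hx0 : (0:ℝ) < x := hx
    rw [norm_mul, Complex.norm_cpow_eq_rpow_re_of_pos hx0]
    simp [Complex.sub_re, hσ]
  -- integrability of g u * u^(-α)
  have hgI : IntegrableOn (fun u : ℝ => g u * (u:ℂ) ^ (-α)) (Ioi 0) := by
    refine Integrable.mono' hg (hgm.mul (measurable_ofReal_cpow (-α))).aestronglyMeasurable ?_
    filter_upwards [ae_restrict_mem measurableSet_Ioi] with x hx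
    have hx0 : (0:ℝ) < x := hx
    rw [norm_mul, Complex.norm_cpow_eq_rpow_re_of_pos hx0]
    simp [hσ]
  -- measurability of the product function
  set F : ℝ × ℝ → ℂ := fun p => f (p.1 * p.2) * g p.2 * (p.1 : ℂ) ^ (α - 1) with hF
  have hFm : AEStronglyMeasurable F
      ((volume.restrict (Ioi 0)).prod (volume.restrict (Ioi 0))) :=
    (((hfm.comp (measurable_fst.mul measurable_snd)).mul (hgm.comp measurable_snd)).mul
      (hcm.comp measurable_fst)).aestronglyMeasurable
  -- a.e. integrability in x for fixed y
  have hae : ∀ᵐ y ∂(volume.restrict (Ioi (0:ℝ))),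
      Integrable (fun x => F (x, y)) (volume.restrict (Ioi (0:ℝ))) := by
    filter_upwards [ae_restrict_mem measurableSet_Ioi] with y hy
    have := (inner_shift_int α f hy hfI).const_mul (g y)
    exact this.congr (Filter.Eventually.of_forall fun x => by simp only [hF]; ring)
  -- integrability of the norm-integral in y
  have hnorm : Integrable (fun y => ∫ x, ‖F (x, y)‖ ∂(volume.restrict (Ioi (0:ℝ))))
      (volume.restrict (Ioi (0:ℝ))) := by
    set C : ℝ := ∫ u in Ioi (0:ℝ), ‖f u‖ * u ^ (σ - 1) with hC
    have key : ∀ y ∈ Ioi (0:ℝ),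
        (∫ x, ‖F (x, y)‖ ∂(volume.restrict (Ioi (0:ℝ)))) = ‖g y‖ * y ^ (-σ) * C := by
      intro y hy
      have hy0 : (0:ℝ) < y := hy
      have step : ∀ x ∈ Ioi (0:ℝ), ‖F (x, y)‖ = ‖g y‖ * ((fun t => ‖f t‖) (x * y) * x ^ (σ - 1)) := by
        intro x hx
        have hx0 : (0:ℝ) < x := hx
        simp only [hF, norm_mul, 
          Complex.norm_cpow_eq_rpow_re_of_pos hx0, Complex.sub_re, Complex.one_re]
        ring
      rw [setIntegral_congr_fun measurableSet_Ioi step, integral_const_mul,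
        inner_shift_eq_real σ (fun t => ‖f t‖) hy0, ← hC]
      ring
    have hgC : Integrable (fun y => ‖g y‖ * y ^ (-σ) * C) (volume.restrict (Ioi (0:ℝ))) :=
      hg.mul_const C
    refine hgC.congr ?_
    filter_upwards [ae_restrict_mem measurableSet_Ioi] with y hy
    exact (key y hy).symm
  have hInt : Integrable F ((volume.restrict (Ioi (0:ℝ))).prod (volume.restrict (Ioi (0:ℝ)))) :=
    (integrable_prod_iff' hFm).mpr ⟨hae, hnorm⟩
  have hIntOn : IntegrableOn F (Ioi (0:ℝ) ×ˢ Ioi (0:ℝ)) := by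
    rw [IntegrableOn, Measure.volume_eq_prod, ← Measure.prod_restrict]
    exact hInt
  refine ⟨hIntOn, ?_⟩
  -- compute the iterated integral
  have hswap : (∫ x in Ioi (0:ℝ), ∫ y in Ioi (0:ℝ), f (x * y) * g y * (x:ℂ) ^ (α - 1)) =
      ∫ y in Ioi (0:ℝ), ∫ x in Ioi (0:ℝ), f (x * y) * g y * (x:ℂ) ^ (α - 1) :=
    integral_integral_swap hInt
  rw [hswap]
  set I : ℂ := ∫ x in Ioi (0:ℝ), f x * (x:ℂ) ^ (α - 1) with hI
  have inner : ∀ y ∈ Ioi (0:ℝ),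
      (∫ x in Ioi (0:ℝ), f (x * y) * g y * (x:ℂ) ^ (α - 1)) = g y * (y:ℂ) ^ (-α) * I := by
    intro y hy
    have hy0 : (0:ℝ) < y := hy
    have : (∫ x in Ioi (0:ℝ), f (x * y) * g y * (x:ℂ) ^ (α - 1)) =
        ∫ x in Ioi (0:ℝ), g y * (f (x * y) * (x:ℂ) ^ (α - 1)) := by
      refine setIntegral_congr_fun measurableSet_Ioi fun x _ => by ring
    rw [this, integral_const_mul, inner_shift_eq α f hy0, ← hI]
    ring
  rw [setIntegral_congr_fun measurableSet_Ioi inner]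
  have : (∫ y in Ioi (0:ℝ), g y * (y:ℂ) ^ (-α) * I) =
      (∫ y in Ioi (0:ℝ), g y * (y:ℂ) ^ (-α)) * I := integral_mul_const I _
  rw [this, show (1 - α) - 1 = -α by ring, mul_comm]
end

section
/- Let g, h : (0,∞) → ℂ be measurable, let c ∈ ℝ and α ∈ ℂ. Assume: (i) g is continuous and x ↦ |g(x)| x^{c−1} is integrable on (0,∞); (ii) t ↦ g̃(c+it) is integrable on ℝ, where g̃ denotes the Mellin transform of g; (iii) x ↦ |h(x)| x^{Re α − c − 1} is integrable on (0,∞); (iv) x ↦ |g(x) h(x)| x^{Re α − 1} is integrable on (0,∞). Then the Parseval formula for Mellin transforms holds: ∫₀^∞ g(x) h(x) x^{α−1} dx = (1/2π) ∫_ℝ g̃(c+it) · h̃(α − c − it) dt. -/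
open MeasureTheory Set

/-- **Parseval formula for Mellin transforms.**
Assume `g` is continuous on `(0,∞)` with `x ↦ |g x| x^{c-1}` integrable, its Mellin
transform `t ↦ g̃(c+it)` is integrable on `ℝ`, `h` is measurable with
`x ↦ |h x| x^{Re α - c - 1}` integrable, and `x ↦ |g x · h x| x^{Re α - 1}` integrable.
Then `∫₀^∞ g(x) h(x) x^{α-1} dx = (1/2π) ∫_ℝ g̃(c+it) h̃(α-c-it) dt`. -/
theorem mellin_parseval (g h : ℝ → ℂ) (c : ℝ) (α : ℂ)
    (hgc : ContinuousOn g (Ioi 0)) (hhm : Measurable h)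
    (hg1 : IntegrableOn (fun x : ℝ => ‖g x‖ * x ^ (c - 1)) (Ioi 0))
    (hg2 : Integrable
      (fun t : ℝ => ∫ x in Ioi (0 : ℝ), g x * (x : ℂ) ^ ((c : ℂ) + t * Complex.I - 1)))
    (hh : IntegrableOn (fun x : ℝ => ‖h x‖ * x ^ (α.re - c - 1)) (Ioi 0))
    (hgh : IntegrableOn (fun x : ℝ => ‖g x * h x‖ * x ^ (α.re - 1)) (Ioi 0)) :
    ∫ x in Ioi (0 : ℝ), g x * h x * (x : ℂ) ^ (α - 1) =
      (1 / (2 * (Real.pi : ℂ))) *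
        ∫ t : ℝ, (∫ x in Ioi (0 : ℝ), g x * (x : ℂ) ^ ((c : ℂ) + t * Complex.I - 1)) *
          ∫ x in Ioi (0 : ℝ), h x * (x : ℂ) ^ ((α - c - t * Complex.I) - 1) := by
  set F : ℝ → ℂ := fun t => ∫ x in Ioi (0 : ℝ), g x * (x : ℂ) ^ ((c : ℂ) + t * Complex.I - 1)
    with hFdef
  have hgm : AEStronglyMeasurable g (volume.restrict (Ioi 0)) :=
    hgc.aestronglyMeasurable measurableSet_Ioi
  -- Mellin transform of g agrees with F
  have hmF : ∀ t : ℝ, mellin g ((c : ℂ) + t * Complex.I) = F t := by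
    intro t
    simp only [mellin, smul_eq_mul, hFdef]
    exact setIntegral_congr_fun measurableSet_Ioi fun x _ => mul_comm _ _
  have hconv : MellinConvergent g c := by
    rw [MellinConvergent,
      mellin_convergent_iff_norm (subset_refl _) measurableSet_Ioi hgm]
    simp only [Complex.ofReal_re]
    exact hg1.congr_fun (fun x _ => mul_comm _ _) measurableSet_Ioi
  have hvert : Complex.VerticalIntegrable (mellin g) c := by
    refine hg2.congr (Filter.Eventually.of_forall fun t => ?_)
    exact (hmF t).symm
  -- inversion: g x = mellinInv c (mellin g) x for x > 0
  have hinv : ∀ x ∈ Ioi (0 : ℝ), g x = mellinInv c (mellin g) x := fun x hx =>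
    (mellinInv_mellin_eq c g hx hconv hvert (hgc.continuousAt (Ioi_mem_nhds hx))).symm
  -- pointwise rewriting of the integrand
  have key : ∀ x ∈ Ioi (0 : ℝ),
      g x * h x * (x : ℂ) ^ (α - 1)
        = (1 / (2 * Real.pi)) •
            ∫ t : ℝ, F t * (h x * (x : ℂ) ^ ((α - c - t * Complex.I) - 1)) := by
    intro x hx
    have hx0 : (x : ℂ) ≠ 0 := Complex.ofReal_ne_zero.2 (ne_of_gt hx)
    rw [hinv x hx, mellinInv]
    simp only [hmF, smul_eq_mul]
    rw [smul_mul_assoc, smul_mul_assoc, ← integral_mul_const, ← integral_mul_const]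
    congr 1
    refine integral_congr_ae (Filter.Eventually.of_forall fun t => ?_)
    have hpow : (x : ℂ) ^ (-((c : ℂ) + t * Complex.I)) * (x : ℂ) ^ (α - 1)
        = (x : ℂ) ^ ((α - c - t * Complex.I) - 1) := by
      rw [← Complex.cpow_add _ _ hx0]
      ring_nf
    calc (x : ℂ) ^ (-((c : ℂ) + t * Complex.I)) * F t * h x * (x : ℂ) ^ (α - 1)
        = F t * (h x * ((x : ℂ) ^ (-((c : ℂ) + t * Complex.I)) * (x : ℂ) ^ (α - 1))) := by ring
      _ = F t * (h x * (x : ℂ) ^ ((α - c - t * Complex.I) - 1)) := by rw [hpow]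
  -- Fubini hypothesis
  have hFub : Integrable
      (Function.uncurry fun (x : ℝ) (t : ℝ) =>
        F t * (h x * (x : ℂ) ^ ((α - c - t * Complex.I) - 1)))
      ((volume.restrict (Ioi 0)).prod volume) := by
    have hmeas : AEStronglyMeasurable
        (Function.uncurry fun (x : ℝ) (t : ℝ) =>
          F t * (h x * (x : ℂ) ^ ((α - c - t * Complex.I) - 1)))
        ((volume.restrict (Ioi 0)).prod volume) := by
      have h1 : AEStronglyMeasurable (fun z : ℝ × ℝ => F z.2)
          ((volume.restrict (Ioi 0)).prod volume) := hg2.aestronglyMeasurable.comp_snd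
      have h2 : AEStronglyMeasurable (fun z : ℝ × ℝ => h z.1)
          ((volume.restrict (Ioi 0)).prod volume) :=
        (hhm.comp measurable_fst).aestronglyMeasurable
      have h3 : AEStronglyMeasurable
          (fun z : ℝ × ℝ => (z.1 : ℂ) ^ ((α - c - z.2 * Complex.I) - 1))
          ((volume.restrict (Ioi 0)).prod volume) := by
        have hmexp : Measurable (fun z : ℝ × ℝ =>
            Complex.exp (((α - c - z.2 * Complex.I) - 1) * Complex.log z.1)) := by
          apply Complex.measurable_exp.comp
          exact (((measurable_const.sub
            ((Complex.measurable_ofReal.comp measurable_snd).mul measurable_const)).sub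
            measurable_const).mul
            (Complex.measurable_log.comp (Complex.measurable_ofReal.comp measurable_fst)))
        refine (hmexp.aestronglyMeasurable).congr ?_
        have hae : ∀ᵐ z : ℝ × ℝ ∂(volume.restrict (Ioi 0)).prod volume,
            z ∈ (Ioi (0 : ℝ)) ×ˢ (univ : Set ℝ) := by
          rw [← Measure.restrict_univ (μ := (volume : Measure ℝ)),
            Measure.prod_restrict]
          exact ae_restrict_mem (measurableSet_Ioi.prod MeasurableSet.univ)
        filter_upwards [hae] with z hz
        have hz1 : (z.1 : ℂ) ≠ 0 := Complex.ofReal_ne_zero.2 (ne_of_gt hz.1)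
        rw [Complex.cpow_def_of_ne_zero hz1, mul_comm (Complex.log _)]
      exact h1.mul (h2.mul h3)
    refine Integrable.mono' (hh.mul_prod hg2.norm) hmeas ?_
    have hae : ∀ᵐ z : ℝ × ℝ ∂(volume.restrict (Ioi 0)).prod volume,
        z ∈ (Ioi (0 : ℝ)) ×ˢ (univ : Set ℝ) := by
      rw [← Measure.restrict_univ (μ := (volume : Measure ℝ)), Measure.prod_restrict]
      exact ae_restrict_mem (measurableSet_Ioi.prod MeasurableSet.univ)
    filter_upwards [hae] with z hz
    have hz1 : (0 : ℝ) < z.1 := hz.1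
    rw [Function.uncurry]
    simp only [norm_mul]
    rw [Complex.norm_cpow_eq_rpow_re_of_pos hz1]
    have : ((α - c - z.2 * Complex.I) - 1).re = α.re - c - 1 := by
      simp [Complex.sub_re, Complex.mul_re, Complex.I_re, Complex.I_im]
    rw [this]
    calc ‖F z.2‖ * (‖h z.1‖ * z.1 ^ (α.re - c - 1))
        = ‖h z.1‖ * z.1 ^ (α.re - c - 1) * ‖F z.2‖ := by ring
      _ ≤ ‖h z.1‖ * z.1 ^ (α.re - c - 1) * ‖F z.2‖ := le_refl _
  -- put everything together
  calc ∫ x in Ioi (0 : ℝ), g x * h x * (x : ℂ) ^ (α - 1)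
      = ∫ x in Ioi (0 : ℝ), (1 / (2 * Real.pi)) •
          ∫ t : ℝ, F t * (h x * (x : ℂ) ^ ((α - c - t * Complex.I) - 1)) :=
        setIntegral_congr_fun measurableSet_Ioi key
    _ = (1 / (2 * Real.pi)) • ∫ x in Ioi (0 : ℝ),
          ∫ t : ℝ, F t * (h x * (x : ℂ) ^ ((α - c - t * Complex.I) - 1)) :=
        integral_smul _ _
    _ = (1 / (2 * Real.pi)) • ∫ t : ℝ, ∫ x in Ioi (0 : ℝ),
          F t * (h x * (x : ℂ) ^ ((α - c - t * Complex.I) - 1)) := by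
        rw [integral_integral_swap hFub]
    _ = (1 / (2 * Real.pi)) • ∫ t : ℝ, F t *
          ∫ x in Ioi (0 : ℝ), h x * (x : ℂ) ^ ((α - c - t * Complex.I) - 1) := by
        congr 1
        exact integral_congr_ae (Filter.Eventually.of_forall fun t => integral_const_mul _ _)
    _ = (1 / (2 * (Real.pi : ℂ))) * ∫ t : ℝ, F t *
          ∫ x in Ioi (0 : ℝ), h x * (x : ℂ) ^ ((α - c - t * Complex.I) - 1) := by
        rw [Complex.real_smul]
        push_cast
        ring
end

section
/- Let 𝔄 be a unital C*-algebra and let b ∈ 𝔄 be a positive invertible element. Then for every real α > 0, the 𝔄-valued function t ↦ t^{α−1} · exp(−t b) is Bochner integrable on (0,∞) and ∫₀^∞ t^{α−1} exp(−t b) dt = Γ(α) · b^{−α}, where b^{−α} is the real power of b defined by the continuous functional calculus applied to x ↦ x^{−α} on the spectrum of b. -/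
open MeasureTheory Set

/-- **Mellin representation of real powers in a C*-algebra.**
Let `𝔄` be a unital C*-algebra and `b ∈ 𝔄` positive and invertible. For every real `α > 0`,
`t ↦ t^{α-1} exp (-t b)` is Bochner integrable on `(0,∞)` and
`∫₀^∞ t^{α-1} exp (-t b) dt = Γ(α) b^{-α}`, where `b^{-α}` is given by the continuous
functional calculus applied to `x ↦ x^{-α}`. -/
theorem cstar_mellin_exp_eq_Gamma_smul_rpow {A : Type*} [CStarAlgebra A]
    [PartialOrder A] [StarOrderedRing A]
    (b : A) (hb : 0 ≤ b) (hbu : IsUnit b) (α : ℝ) (hα : 0 < α) :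
    IntegrableOn (fun t : ℝ => t ^ (α - 1) • NormedSpace.exp (-(t • b))) (Ioi 0) ∧
    ∫ t in Ioi (0 : ℝ), t ^ (α - 1) • NormedSpace.exp (-(t • b)) =
      Real.Gamma α • cfc (fun x : ℝ => x ^ (-α)) b := by
  have hsa : IsSelfAdjoint b := IsSelfAdjoint.of_nonneg hb
  -- spectral lower bound
  obtain ⟨ε, hε, hspec⟩ : ∃ ε > 0, ∀ x ∈ spectrum ℝ b, ε ≤ x := by
    have h0 : (0 : ℝ) ∉ spectrum ℝ b := spectrum.zero_notMem_iff ℝ |>.mpr hbu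
    have hcl : IsClosed (spectrum ℝ b) := spectrum.isClosed b
    obtain ⟨ε, hε, hball⟩ := Metric.isOpen_iff.mp hcl.isOpen_compl 0 h0
    refine ⟨ε, hε, fun x hx => ?_⟩
    have hxnn : 0 ≤ x := spectrum_nonneg_of_nonneg hb hx
    by_contra h
    push_neg at h
    exact (hball (by simpa [Real.norm_eq_abs, abs_of_nonneg hxnn] using h : x ∈ Metric.ball 0 ε)) hx
  have hpos : ∀ x : spectrum ℝ b, (0 : ℝ) < x := fun x => lt_of_lt_of_le hε (hspec x x.2)
  -- the function into C(spectrum, ℝ)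
  set K := spectrum ℝ b
  let G : C(ℝ × K, ℝ) := ⟨fun p => Real.exp (-(p.1 * p.2)), by fun_prop⟩
  let E : C(ℝ, C(K, ℝ)) := G.curry
  let F : ℝ → C(K, ℝ) := fun t => t ^ (α - 1) • E t
  have hEapp : ∀ (t : ℝ) (x : K), E t x = Real.exp (-(t * x)) := fun t x => rfl
  -- measurability
  have hFmeas : AEStronglyMeasurable F (volume.restrict (Ioi 0)) := by
    refine ContinuousOn.aestronglyMeasurable ?_ measurableSet_Ioi
    exact (continuousOn_id.rpow_const fun t ht => Or.inl (ne_of_gt ht)).smul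
      E.continuous.continuousOn
  -- dominating function
  have hg : IntegrableOn (fun t : ℝ => t ^ (α - 1) * Real.exp (-(ε * t))) (Ioi 0) := by
    have := integrableOn_rpow_mul_exp_neg_mul_rpow (s := α - 1) (p := 1)
      (by linarith) zero_lt_one hε
    simpa [Real.rpow_one, neg_mul] using this
  have hFnorm : ∀ t ∈ Ioi (0 : ℝ), ‖F t‖ ≤ t ^ (α - 1) * Real.exp (-(ε * t)) := by
    intro t ht
    have : ‖F t‖ = ‖t ^ (α - 1)‖ * ‖E t‖ := norm_smul (t ^ (α - 1)) (E t)
    rw [this, Real.norm_eq_abs, abs_of_nonneg (Real.rpow_nonneg (le_of_lt ht) _)]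
    refine mul_le_mul_of_nonneg_left ?_ (Real.rpow_nonneg (le_of_lt ht) _)
    refine (ContinuousMap.norm_le _ (Real.exp_pos _).le).mpr fun x => ?_
    rw [hEapp, Real.norm_eq_abs, abs_of_nonneg (Real.exp_pos _).le]
    have ht' : (0:ℝ) < t := ht
    have hx' : ε ≤ (x : ℝ) := hspec x x.2
    have : t * ε ≤ t * x := mul_le_mul_of_nonneg_left hx' ht'.le
    exact Real.exp_le_exp.mpr (by linarith)
  have hF : IntegrableOn F (Ioi 0) := by
    refine Integrable.mono' hg hFmeas ?_
    exact (ae_restrict_iff' measurableSet_Ioi).mpr (ae_of_all _ hFnorm)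
  -- the cfc hom as a CLM
  let ψ := cfcHom (R := ℝ) hsa
  let Φ : C(K, ℝ) →L[ℝ] A :=
    { toLinearMap := ψ.toAlgHom.toLinearMap
      cont := (cfcHom_isClosedEmbedding (R := ℝ) hsa).continuous }
  have hΦapp : ∀ f : C(K, ℝ), Φ f = ψ f := fun f => rfl
  -- identify the integrand
  have hkey : ∀ t ∈ Ioi (0 : ℝ),
      t ^ (α - 1) • NormedSpace.exp (-(t • b)) = Φ (F t) := by
    intro t _
    have h1 : ψ (E t) = NormedSpace.exp (-(t • b)) := by
      have hc : ContinuousOn (fun x : ℝ => Real.exp (-(t * x))) K := by fun_prop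
      have e1 : cfc (fun x : ℝ => Real.exp (-(t * x))) b = ψ ⟨_, hc.restrict⟩ :=
        cfc_apply _ b hsa hc
      have e2 : E t = (⟨_, hc.restrict⟩ : C(K, ℝ)) := by ext x; rfl
      have hsa2 : IsSelfAdjoint (t • b) := IsSelfAdjoint.smul (star_trivial t) hsa
      have hsa3 : IsSelfAdjoint (-(t • b)) := hsa2.neg
      have e3 : cfc (fun x : ℝ => Real.exp (-(t * x))) b
          = cfc (fun x : ℝ => Real.exp (-x)) (t • b) :=
        cfc_comp_const_mul t (fun x : ℝ => Real.exp (-x)) b (by fun_prop) hsa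
      have e4 : cfc (fun x : ℝ => Real.exp (-x)) (t • b)
          = cfc Real.exp (-(t • b)) :=
        cfc_comp_neg (a := t • b) (f := Real.exp) (by fun_prop) hsa2
      have e5 : cfc Real.exp (-(t • b)) = NormedSpace.exp (-(t • b)) :=
        CFC.real_exp_eq_normedSpace_exp hsa3
      rw [e2, ← e1, e3, e4, e5]
    rw [_root_.map_smul, hΦapp, h1]
  -- integral of F in C(K, ℝ)
  let g : C(K, ℝ) := ⟨fun x => (x : ℝ) ^ (-α),
    continuous_subtype_val.rpow_const fun x => Or.inl (ne_of_gt (hpos x))⟩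
  have hInt : ∫ t in Ioi (0 : ℝ), F t = Real.Gamma α • g := by
    ext x
    have hx : (0 : ℝ) < x := hpos x
    have := (ContinuousMap.evalCLM (R := ℝ) x).integral_comp_comm hF
    have h0 : (∫ t in Ioi (0 : ℝ), F t) x
        = (ContinuousMap.evalCLM (R := ℝ) x) (∫ t in Ioi (0 : ℝ), F t) := rfl
    have heval : (∫ t in Ioi (0 : ℝ), F t) x
        = ∫ t in Ioi (0 : ℝ), t ^ (α - 1) * Real.exp (-(↑x * t)) := by
      rw [h0, ← this]
      refine setIntegral_congr_fun measurableSet_Ioi fun t _ => ?_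
      show (F t) x = _
      simp [F, hEapp, mul_comm (t : ℝ) (x : ℝ), smul_eq_mul]
    rw [heval, Real.integral_rpow_mul_exp_neg_mul_Ioi hα hx]
    show _ = Real.Gamma α * (x : ℝ) ^ (-α)
    rw [one_div, Real.inv_rpow hx.le, ← Real.rpow_neg hx.le, mul_comm]
  -- identify RHS
  have hrhs : cfc (fun x : ℝ => x ^ (-α)) b = ψ g := by
    have hc : ContinuousOn (fun x : ℝ => x ^ (-α)) K := fun x hx =>
      (Real.continuousAt_rpow_const x (-α) (Or.inl (ne_of_gt (hpos ⟨x, hx⟩)))).continuousWithinAt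
    rw [cfc_apply _ b hsa hc]
    congr 1
  constructor
  · exact (integrableOn_congr_fun hkey measurableSet_Ioi).mpr (Φ.integrable_comp hF)
  · rw [setIntegral_congr_fun measurableSet_Ioi hkey, Φ.integral_comp_comm hF, hInt,
      _root_.map_smul, hΦapp, hrhs]
end

section
/- Let f : (0,∞) → ℂ be measurable, let c ∈ ℂ, ε ∈ ℝ, k ∈ ℕ, and let M, b ∈ ℝ with ε < M and −ε < b. Assume: (i) x ↦ (f(x) − c x^{ε} (log x)^k) x^{σ−1} is integrable on (0,1] for every σ > −M; (ii) x ↦ f(x) x^{σ−1} is integrable on [1,∞) for every σ < b. Then the Mellin transform f̃(α) = ∫₀^∞ f(x) x^{α−1} dx, which exists for −ε < Re α < b, continues meromorphically to the strip −M < Re α < b with a single pole at α = −ε: there exists a holomorphic function h on {α : −M < Re α < b} such that f̃(α) = h(α) + c (−1)^k k! / (α + ε)^{k+1} for all α with −ε < Re α < b. -/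
open MeasureTheory Set

namespace MellinContinuationAux

open Filter Complex Metric

/-- Log bound: `|log x| ≤ δ⁻¹ (x^{-δ} + x^δ)` for `x > 0`. -/
lemma abs_log_le (δ : ℝ) (hδ : 0 < δ) {x : ℝ} (hx : 0 < x) :
    |Real.log x| ≤ δ⁻¹ * (x ^ (-δ) + x ^ δ) := by
  have key : ∀ y : ℝ, 1 ≤ y → Real.log y ≤ δ⁻¹ * y ^ δ := by
    intro y hy
    have h1 : Real.log (y ^ δ) ≤ y ^ δ := le_trans (Real.log_le_sub_one_of_pos
      (Real.rpow_pos_of_pos (lt_of_lt_of_le one_pos hy) δ)) (by linarith)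
    rw [Real.log_rpow (lt_of_lt_of_le one_pos hy)] at h1
    calc Real.log y = δ⁻¹ * (δ * Real.log y) := by field_simp
      _ ≤ δ⁻¹ * y ^ δ := by gcongr
  rcases le_or_gt 1 x with h | h
  · rw [_root_.abs_of_nonneg (Real.log_nonneg h)]
    have := key x h
    have h2 : (0:ℝ) ≤ x ^ (-δ) := (Real.rpow_pos_of_pos hx _).le
    nlinarith [inv_pos.mpr hδ]
  · rw [abs_of_nonpos (Real.log_nonpos hx.le h.le)]
    have hx1 : 1 ≤ x⁻¹ := (one_le_inv₀ hx).mpr h.le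
    have := key x⁻¹ hx1
    rw [Real.log_inv, Real.inv_rpow hx.le, ← Real.rpow_neg hx.le] at this
    have h2 : (0:ℝ) ≤ x ^ δ := (Real.rpow_pos_of_pos hx _).le
    nlinarith [inv_pos.mpr hδ]

lemma rpow_le_rpow_add {x a t c : ℝ} (hx : 0 < x) (h1 : a ≤ t) (h2 : t ≤ c) :
    x ^ t ≤ x ^ a + x ^ c := by
  rcases le_or_gt 1 x with h | h
  · have := Real.rpow_le_rpow_of_exponent_le h h2
    have h2 : (0:ℝ) ≤ x ^ a := (Real.rpow_pos_of_pos hx _).le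
    linarith
  · have := Real.rpow_le_rpow_of_exponent_ge hx h.le h1
    have h2 : (0:ℝ) ≤ x ^ c := (Real.rpow_pos_of_pos hx _).le
    linarith

lemma aesm_cpow {F : ℝ → ℂ} {S : Set ℝ} (hS : MeasurableSet S) (hSsub : S ⊆ Ioi 0)
    (hF : AEStronglyMeasurable F (volume.restrict S)) (α : ℂ) :
    AEStronglyMeasurable (fun x : ℝ => F x * (x : ℂ) ^ (α - 1)) (volume.restrict S) := by
  refine hF.mul ?_
  refine (continuousOn_of_forall_continuousAt fun x hx => ?_).aestronglyMeasurable hS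
  exact Complex.continuousAt_ofReal_cpow_const x _ (Or.inr (ne_of_gt (hSsub hx)))

lemma norm_mul_cpow {F : ℝ → ℂ} {x : ℝ} (hx : 0 < x) (α : ℂ) :
    ‖F x * (x : ℂ) ^ (α - 1)‖ = ‖F x‖ * x ^ (α.re - 1) := by
  rw [norm_mul, Complex.norm_cpow_eq_rpow_re_of_pos hx,
    Complex.sub_re, Complex.one_re]

/-- Integrability at complex exponent with real part between two real exponents. -/
lemma integrableOn_cpow_between {F : ℝ → ℂ} {S : Set ℝ} (hS : MeasurableSet S)
    (hSsub : S ⊆ Ioi 0) (hF : AEStronglyMeasurable F (volume.restrict S)) {σ₁ σ₂ : ℝ}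
    (h₁ : IntegrableOn (fun x : ℝ => F x * (x : ℂ) ^ ((σ₁ : ℂ) - 1)) S)
    (h₂ : IntegrableOn (fun x : ℝ => F x * (x : ℂ) ^ ((σ₂ : ℂ) - 1)) S)
    {α : ℂ} (ha : σ₁ ≤ α.re) (hb : α.re ≤ σ₂) :
    IntegrableOn (fun x : ℝ => F x * (x : ℂ) ^ (α - 1)) S := by
  refine Integrable.mono' (h₁.norm.add h₂.norm) (aesm_cpow hS hSsub hF α) ?_
  filter_upwards [ae_restrict_mem hS] with x hx
  have hx0 : 0 < x := hSsub hx
  simp only [Pi.add_apply]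
  rw [norm_mul_cpow hx0, norm_mul_cpow hx0, norm_mul_cpow hx0]
  simp only [Complex.ofReal_re]
  rw [← mul_add]
  exact mul_le_mul_of_nonneg_left
    (rpow_le_rpow_add hx0 (by linarith) (by linarith)) (norm_nonneg _)

lemma hasDerivAt_mellin_piece {F : ℝ → ℂ} {S : Set ℝ} (hS : MeasurableSet S)
    (hSsub : S ⊆ Ioi 0) (hF : AEStronglyMeasurable F (volume.restrict S)) {σ₁ σ₂ : ℝ}
    (h₁ : IntegrableOn (fun x : ℝ => F x * (x : ℂ) ^ ((σ₁ : ℂ) - 1)) S)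
    (h₂ : IntegrableOn (fun x : ℝ => F x * (x : ℂ) ^ ((σ₂ : ℂ) - 1)) S)
    {α : ℂ} (hα₁ : σ₁ < α.re) (hα₂ : α.re < σ₂) :
    HasDerivAt (fun β : ℂ => ∫ x in S, F x * (x : ℂ) ^ (β - 1))
      (∫ x in S, F x * (x : ℂ) ^ (α - 1) * (Real.log x : ℂ)) α := by
  set δ : ℝ := min (α.re - σ₁) (σ₂ - α.re) / 4 with hδdef
  have hδ : 0 < δ := by
    apply div_pos _ (by norm_num)
    exact lt_min (by linarith) (by linarith)
  have hre : ∀ β : ℂ, β ∈ ball α δ → σ₁ ≤ β.re - δ ∧ β.re + δ ≤ σ₂ := by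
    intro β hβ
    have h1 : |(β - α).re| ≤ dist β α := by
      rw [Complex.dist_eq]
      exact Complex.abs_re_le_norm _
    rw [mem_ball] at hβ
    rw [Complex.sub_re] at h1
    have h2 : |β.re - α.re| < δ := lt_of_le_of_lt h1 hβ
    rw [abs_lt] at h2
    have h3 : δ ≤ (α.re - σ₁) / 4 := by
      apply div_le_div_of_nonneg_right (min_le_left _ _) (by norm_num) |>.trans_eq rfl
    have h4 : δ ≤ (σ₂ - α.re) / 4 := by
      apply div_le_div_of_nonneg_right (min_le_right _ _) (by norm_num) |>.trans_eq rfl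
    constructor <;> linarith
  set bound : ℝ → ℝ := fun x =>
    δ⁻¹ * (2 * (‖F x * (x:ℂ) ^ ((σ₁:ℂ) - 1)‖ + ‖F x * (x:ℂ) ^ ((σ₂:ℂ) - 1)‖)) with hbdef
  have key := hasDerivAt_integral_of_dominated_loc_of_deriv_le (μ := volume.restrict S)
    (F := fun (β : ℂ) (x : ℝ) => F x * (x : ℂ) ^ (β - 1))
    (F' := fun (β : ℂ) (x : ℝ) => F x * (x : ℂ) ^ (β - 1) * (Real.log x : ℂ))
    (x₀ := α) (bound := bound) (s := ball α δ) (ball_mem_nhds α hδ)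
    (Eventually.of_forall fun β => aesm_cpow hS hSsub hF β)
    (integrableOn_cpow_between hS hSsub hF h₁ h₂ hα₁.le hα₂.le)
    ((aesm_cpow hS hSsub hF α).mul
      ((Complex.measurable_ofReal.comp Real.measurable_log).aestronglyMeasurable))
    ?_ ?_ ?_
  · exact key.2
  · filter_upwards [ae_restrict_mem hS] with x hx β hβ
    have hx0 : 0 < x := hSsub hx
    rw [norm_mul, norm_mul_cpow hx0]
    have hlog : ‖((Real.log x : ℝ) : ℂ)‖ = |Real.log x| := by
      rw [Complex.norm_real, Real.norm_eq_abs]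
    rw [hlog]
    have hb1 : |Real.log x| ≤ δ⁻¹ * (x ^ (-δ) + x ^ δ) := abs_log_le δ hδ hx0
    obtain ⟨hr1, hr2⟩ := hre β hβ
    have hrpow : x ^ (β.re - 1) * (x ^ (-δ) + x ^ δ) ≤
        2 * (x ^ (σ₁ - 1) + x ^ (σ₂ - 1)) := by
      rw [mul_add, ← Real.rpow_add hx0, ← Real.rpow_add hx0]
      have e1 : x ^ (β.re - 1 + -δ) ≤ x ^ (σ₁ - 1) + x ^ (σ₂ - 1) :=
        rpow_le_rpow_add hx0 (by linarith) (by linarith)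
      have e2 : x ^ (β.re - 1 + δ) ≤ x ^ (σ₁ - 1) + x ^ (σ₂ - 1) :=
        rpow_le_rpow_add hx0 (by linarith) (by linarith)
      linarith
    have hFnn : (0:ℝ) ≤ ‖F x‖ := norm_nonneg _
    have hxnn : (0:ℝ) ≤ x ^ (β.re - 1) := (Real.rpow_pos_of_pos hx0 _).le
    calc ‖F x‖ * x ^ (β.re - 1) * |Real.log x|
        ≤ ‖F x‖ * x ^ (β.re - 1) * (δ⁻¹ * (x ^ (-δ) + x ^ δ)) := by
          apply mul_le_mul_of_nonneg_left hb1 (by positivity)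
      _ = δ⁻¹ * (‖F x‖ * (x ^ (β.re - 1) * (x ^ (-δ) + x ^ δ))) := by ring
      _ ≤ δ⁻¹ * (‖F x‖ * (2 * (x ^ (σ₁ - 1) + x ^ (σ₂ - 1)))) := by
          apply mul_le_mul_of_nonneg_left _ (by positivity)
          exact mul_le_mul_of_nonneg_left hrpow hFnn
      _ = bound x := by
          have e1 : ‖F x * (x:ℂ) ^ ((σ₁:ℂ) - 1)‖ = ‖F x‖ * x ^ (σ₁ - 1) := by
            rw [norm_mul_cpow hx0]; norm_num
          have e2 : ‖F x * (x:ℂ) ^ ((σ₂:ℂ) - 1)‖ = ‖F x‖ * x ^ (σ₂ - 1) := by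
            rw [norm_mul_cpow hx0]; norm_num
          rw [hbdef]
          simp only []
          rw [e1, e2]
          ring
  · exact ((h₁.norm.add h₂.norm).const_mul 2).const_mul δ⁻¹
  · filter_upwards [ae_restrict_mem hS] with x hx β hβ
    have hx0 : 0 < x := hSsub hx
    have hxne : (x : ℂ) ≠ 0 := Complex.ofReal_ne_zero.mpr (ne_of_gt hx0)
    have hd : HasDerivAt (fun β : ℂ => (x : ℂ) ^ (β - 1))
        ((x : ℂ) ^ (β - 1) * Complex.log x * 1) β :=
      HasDerivAt.const_cpow ((hasDerivAt_id β).sub_const 1) (Or.inl hxne)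
    have hd2 := hd.const_mul (F x)
    have : Complex.log (x : ℂ) = ((Real.log x : ℝ) : ℂ) := (Complex.ofReal_log hx0.le).symm
    rw [this] at hd2
    refine hd2.congr_deriv ?_
    ring

/-- integrability of `(log x)^k x^{σ-1}` on `(0,1]` for `σ > 0`. -/
lemma integrableOn_log_pow_cpow (k : ℕ) {σ : ℝ} (hσ : 0 < σ) :
    IntegrableOn (fun x : ℝ => ((Real.log x : ℂ)) ^ k * (x : ℂ) ^ ((σ : ℂ) - 1))
      (Ioc 0 1) := by
  set η : ℝ := σ / (2 * (k + 1)) with hηdef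
  have hη : 0 < η := by positivity
  have hint : IntegrableOn (fun x : ℝ => x ^ (σ / 2 - 1)) (Ioc (0:ℝ) 1) := by
    rw [← intervalIntegrable_iff_integrableOn_Ioc_of_le zero_le_one]
    exact intervalIntegral.intervalIntegrable_rpow' (by linarith)
  refine Integrable.mono' (hint.const_mul ((2 * η⁻¹) ^ k)) ?_ ?_
  · refine AEStronglyMeasurable.mul ?_ ?_
    · exact (((Complex.measurable_ofReal.comp Real.measurable_log).pow_const
        k).aestronglyMeasurable)
    · refine (continuousOn_of_forall_continuousAt fun x hx => ?_).aestronglyMeasurable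
        measurableSet_Ioc
      exact Complex.continuousAt_ofReal_cpow_const x _ (Or.inr (ne_of_gt hx.1))
  · filter_upwards [ae_restrict_mem measurableSet_Ioc] with x hx
    obtain ⟨hx0, hx1⟩ := hx
    rw [norm_mul, norm_pow, Complex.norm_real, Real.norm_eq_abs,
      Complex.norm_cpow_eq_rpow_re_of_pos hx0]
    simp only [Complex.sub_re, Complex.ofReal_re, Complex.one_re]
    have hlog : |Real.log x| ≤ 2 * η⁻¹ * x ^ (-η) := by
      have h1 := abs_log_le η hη hx0
      have h2 : x ^ η ≤ x ^ (-η) := by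
        apply Real.rpow_le_rpow_of_exponent_ge hx0 hx1
        linarith
      calc |Real.log x| ≤ η⁻¹ * (x ^ (-η) + x ^ η) := h1
        _ ≤ η⁻¹ * (x ^ (-η) + x ^ (-η)) := by
            apply mul_le_mul_of_nonneg_left _ (by positivity)
            linarith
        _ = 2 * η⁻¹ * x ^ (-η) := by ring
    have h3 : |Real.log x| ^ k ≤ (2 * η⁻¹ * x ^ (-η)) ^ k :=
      pow_le_pow_left₀ (abs_nonneg _) hlog k
    have h4 : (2 * η⁻¹ * x ^ (-η)) ^ k = (2 * η⁻¹) ^ k * x ^ (-(η * k)) := by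
      rw [mul_pow, ← Real.rpow_natCast (x ^ (-η)) k, ← Real.rpow_mul hx0.le]
      ring_nf
    have h5 : x ^ (-(η * k)) * x ^ (σ - 1) = x ^ (σ - η * k - 1) := by
      rw [← Real.rpow_add hx0]; ring_nf
    have h6 : x ^ (σ - η * k - 1) ≤ x ^ (σ / 2 - 1) := by
      apply Real.rpow_le_rpow_of_exponent_ge hx0 hx1
      have : η * k ≤ σ / 2 := by
        rw [hηdef]
        rw [div_mul_eq_mul_div, div_le_div_iff₀ (by positivity) (by norm_num)]
        have hk : (k : ℝ) ≤ k + 1 := by linarith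
        calc σ * (k:ℝ) * 2 ≤ σ * ((k:ℝ)+1) * 2 := by nlinarith
          _ = σ * (2 * ((k:ℝ)+1)) := by ring
      linarith
    calc |Real.log x| ^ k * x ^ (σ - 1)
        ≤ (2 * η⁻¹ * x ^ (-η)) ^ k * x ^ (σ - 1) := by
          apply mul_le_mul_of_nonneg_right h3 (Real.rpow_pos_of_pos hx0 _).le
      _ = (2 * η⁻¹) ^ k * (x ^ (-(η * k)) * x ^ (σ - 1)) := by rw [h4]; ring
      _ = (2 * η⁻¹) ^ k * x ^ (σ - η * k - 1) := by rw [h5]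
      _ ≤ (2 * η⁻¹) ^ k * x ^ (σ / 2 - 1) := by
          apply mul_le_mul_of_nonneg_left h6 (by positivity)

lemma integral_Ioc_log_pow_cpow (k : ℕ) : ∀ {s : ℂ}, 0 < s.re →
    ∫ x in Ioc (0:ℝ) 1, ((Real.log x : ℂ)) ^ k * (x : ℂ) ^ (s - 1) =
      (-1) ^ k * (Nat.factorial k : ℂ) / s ^ (k + 1) := by
  induction k with
  | zero =>
    intro s hs
    have hsne : s ≠ 0 := fun h => by simp [h] at hs
    have : ∫ x in Ioc (0:ℝ) 1, ((Real.log x : ℂ)) ^ 0 * (x : ℂ) ^ (s - 1) =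
        ∫ x in (0:ℝ)..1, (x : ℂ) ^ (s - 1) := by
      rw [intervalIntegral.integral_of_le zero_le_one]
      simp
    rw [this, integral_cpow]
    · rw [sub_add_cancel]
      rw [Complex.ofReal_one, Complex.ofReal_zero, Complex.one_cpow, Complex.zero_cpow hsne]
      simp [Nat.factorial]
    · left
      simpa using hs
  | succ k ih =>
    intro s hs
    have hopen : IsOpen {z : ℂ | 0 < z.re} := isOpen_lt continuous_const Complex.continuous_re
    have hGd : HasDerivAt
        (fun z : ℂ => ∫ x in Ioc (0:ℝ) 1, ((Real.log x : ℂ)) ^ k * (x : ℂ) ^ (z - 1))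
        (∫ x in Ioc (0:ℝ) 1, ((Real.log x : ℂ)) ^ k * (x : ℂ) ^ (s - 1) * (Real.log x : ℂ))
        s := by
      refine hasDerivAt_mellin_piece measurableSet_Ioc (fun x hx => hx.1) ?_
        (integrableOn_log_pow_cpow k (σ := s.re / 2) (by linarith))
        (integrableOn_log_pow_cpow k (σ := s.re + 1) (by linarith)) (by linarith) (by linarith)
      exact ((Complex.measurable_ofReal.comp Real.measurable_log).pow_const
        k).aestronglyMeasurable
    have hsne : s ≠ 0 := fun h => by simp [h] at hs
    have hpow_ne : s ^ (k + 1) ≠ 0 := pow_ne_zero _ hsne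
    have hCd : HasDerivAt (fun z : ℂ => (-1) ^ k * (Nat.factorial k : ℂ) / z ^ (k + 1))
        ((-1) ^ k * (Nat.factorial k : ℂ) * (-(((k:ℂ) + 1) * s ^ k) / (s ^ (k + 1)) ^ 2)) s := by
      have h1 : HasDerivAt (fun z : ℂ => z ^ (k + 1)) (((k:ℂ) + 1) * s ^ k) s := by
        have := hasDerivAt_pow (k + 1) s
        simpa using this
      have h2 := h1.inv hpow_ne
      have h3 := h2.const_mul ((-1) ^ k * (Nat.factorial k : ℂ))
      simp only [div_eq_mul_inv] at h3 ⊢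
      exact h3
    have hEq : (fun z : ℂ => ∫ x in Ioc (0:ℝ) 1, ((Real.log x : ℂ)) ^ k * (x : ℂ) ^ (z - 1))
        =ᶠ[nhds s] (fun z : ℂ => (-1) ^ k * (Nat.factorial k : ℂ) / z ^ (k + 1)) := by
      filter_upwards [hopen.mem_nhds (by exact hs : s ∈ {z : ℂ | 0 < z.re})] with z hz
      exact ih hz
    have hGd' := (hEq.hasDerivAt_iff).mp hGd
    have huniq := hGd'.unique hCd
    have hrw : ∫ x in Ioc (0:ℝ) 1, ((Real.log x : ℂ)) ^ (k+1) * (x : ℂ) ^ (s - 1) =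
        ∫ x in Ioc (0:ℝ) 1, ((Real.log x : ℂ)) ^ k * (x : ℂ) ^ (s - 1) * (Real.log x : ℂ) := by
      apply integral_congr_ae
      filter_upwards with x
      ring
    rw [hrw, huniq]
    have hk1 : ((k:ℂ) + 1) ≠ 0 := by
      intro h
      have := congrArg Complex.re h
      simp at this
      linarith [Nat.cast_nonneg (α := ℝ) k]
    rw [Nat.factorial_succ]
    push_cast
    field_simp
    ring

end MellinContinuationAux

open MellinContinuationAux

/-- **Meromorphic continuation of a Mellin transform from an asymptotic expansion at 0.**
Let `f : (0,∞) → ℂ` be measurable, `c ∈ ℂ`, `ε ∈ ℝ`, `k ∈ ℕ`, and `M, b ∈ ℝ` with `ε < M`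
and `-ε < b`. Assume `x ↦ (f x - c x^ε (log x)^k) x^{σ-1}` is integrable on `(0,1]` for all
`σ > -M` and `x ↦ f x · x^{σ-1}` is integrable on `[1,∞)` for all `σ < b`. Then the Mellin
transform `f̃(α) = ∫₀^∞ f(x) x^{α-1} dx` exists for `-ε < Re α < b` and continues
meromorphically to `-M < Re α < b` with a single pole at `α = -ε`: there is a holomorphic
`h` on the strip `-M < Re α < b` with
`f̃(α) = h(α) + c (-1)^k k! / (α + ε)^{k+1}` for `-ε < Re α < b`. -/
theorem mellin_meromorphic_continuation (f : ℝ → ℂ) (hfm : Measurable f)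
    (c : ℂ) (ε : ℝ) (k : ℕ) (M b : ℝ) (hεM : ε < M) (hεb : -ε < b)
    (h0 : ∀ σ : ℝ, -M < σ →
      IntegrableOn
        (fun x : ℝ =>
          (f x - c * (x : ℂ) ^ (ε : ℂ) * ((Real.log x : ℂ)) ^ k) * (x : ℂ) ^ ((σ : ℂ) - 1))
        (Ioc 0 1))
    (hinf : ∀ σ : ℝ, σ < b →
      IntegrableOn (fun x : ℝ => f x * (x : ℂ) ^ ((σ : ℂ) - 1)) (Ici 1)) :
    (∀ α : ℂ, -ε < α.re → α.re < b →
      IntegrableOn (fun x : ℝ => f x * (x : ℂ) ^ (α - 1)) (Ioi 0)) ∧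
    ∃ h : ℂ → ℂ, DifferentiableOn ℂ h {α : ℂ | -M < α.re ∧ α.re < b} ∧
      ∀ α : ℂ, -ε < α.re → α.re < b →
        ∫ x in Ioi (0 : ℝ), f x * (x : ℂ) ^ (α - 1) =
          h α + c * (-1) ^ k * (Nat.factorial k : ℂ) / (α + (ε : ℂ)) ^ (k + 1) := by
  set g : ℝ → ℂ := fun x => f x - c * (x : ℂ) ^ (ε : ℂ) * ((Real.log x : ℂ)) ^ k with hgdef
  have hIocsub : Ioc (0:ℝ) 1 ⊆ Ioi 0 := Ioc_subset_Ioi_self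
  have hIoisub : Ioi (1:ℝ) ⊆ Ioi 0 := Ioi_subset_Ioi zero_le_one
  have hg_aesm : AEStronglyMeasurable g (volume.restrict (Ioc 0 1)) := by
    refine (hfm.aestronglyMeasurable.restrict).sub ?_
    refine (continuousOn_of_forall_continuousAt fun x hx => ?_).aestronglyMeasurable
      measurableSet_Ioc
    exact (continuousAt_const.mul
      (Complex.continuousAt_ofReal_cpow_const x _ (Or.inr (ne_of_gt hx.1)))).mul
      (((Complex.continuous_ofReal.continuousAt).comp
        (Real.continuousAt_log (ne_of_gt hx.1))).pow k)
  have hf_aesm : AEStronglyMeasurable f (volume.restrict (Ioi 1)) :=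
    hfm.aestronglyMeasurable.restrict
  have hlog_aesm : ∀ T : Set ℝ, AEStronglyMeasurable
      (fun x : ℝ => ((Real.log x : ℂ)) ^ k) (volume.restrict T) := fun T =>
    ((Complex.measurable_ofReal.comp Real.measurable_log).pow_const k).aestronglyMeasurable
  -- integrability of the g-part on (0,1]
  have intg : ∀ α : ℂ, -M < α.re → IntegrableOn (fun x => g x * (x:ℂ) ^ (α - 1)) (Ioc 0 1) := by
    intro α hα
    exact integrableOn_cpow_between measurableSet_Ioc hIocsub hg_aesm
      (h0 α.re hα) (h0 α.re hα) le_rfl le_rfl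
  -- integrability of f on Ioi 1
  have intf1 : ∀ α : ℂ, α.re < b →
      IntegrableOn (fun x => f x * (x:ℂ) ^ (α - 1)) (Ioi 1) := by
    intro α hα
    exact integrableOn_cpow_between measurableSet_Ioi hIoisub hf_aesm
      ((hinf (α.re - 1) (by linarith)).mono_set Ioi_subset_Ici_self)
      ((hinf ((α.re + b)/2) (by linarith)).mono_set Ioi_subset_Ici_self)
      (by linarith) (by linarith)
  -- the singular part
  have int_sing : ∀ α : ℂ, -ε < α.re →
      IntegrableOn (fun x : ℝ =>
        c * (x : ℂ) ^ (ε : ℂ) * ((Real.log x : ℂ)) ^ k * (x : ℂ) ^ (α - 1)) (Ioc 0 1) := by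
    intro α hα
    have hba : IntegrableOn
        (fun x : ℝ => ((Real.log x : ℂ)) ^ k * (x : ℂ) ^ ((α + ε) - 1)) (Ioc 0 1) := by
      refine integrableOn_cpow_between measurableSet_Ioc hIocsub (hlog_aesm _)
        (integrableOn_log_pow_cpow k (σ := α.re + ε) (by linarith))
        (integrableOn_log_pow_cpow k (σ := α.re + ε) (by linarith)) ?_ ?_ <;>
      simp [Complex.add_re]
    refine IntegrableOn.congr_fun (hba.const_mul c) ?_ measurableSet_Ioc
    intro x hx
    have hxne : (x : ℂ) ≠ 0 := Complex.ofReal_ne_zero.mpr (ne_of_gt hx.1)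
    have h' : (x : ℂ) ^ ((α + ε) - 1) = (x : ℂ) ^ (ε : ℂ) * (x : ℂ) ^ (α - 1) := by
      rw [← Complex.cpow_add _ _ hxne]
      ring_nf
    simp only [h']
    ring
  -- f-integrability on (0,1]
  have intf0 : ∀ α : ℂ, -ε < α.re →
      IntegrableOn (fun x => f x * (x:ℂ) ^ (α - 1)) (Ioc 0 1) := by
    intro α hα
    refine IntegrableOn.congr_fun ((intg α (by linarith)).add (int_sing α hα)) ?_
      measurableSet_Ioc
    intro x _
    simp only [hgdef, Pi.add_apply]
    ring
  refine ⟨?_, ?_⟩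
  · intro α hα1 hα2
    rw [← Ioc_union_Ioi_eq_Ioi (zero_le_one' ℝ)]
    exact (intf0 α hα1).union (intf1 α hα2)
  · refine ⟨fun α => (∫ x in Ioc (0:ℝ) 1, g x * (x:ℂ) ^ (α - 1)) +
      ∫ x in Ioi (1:ℝ), f x * (x:ℂ) ^ (α - 1), ?_, ?_⟩
    · intro α hα
      obtain ⟨hα1, hα2⟩ := hα
      have d1 := hasDerivAt_mellin_piece measurableSet_Ioc hIocsub hg_aesm
        (h0 ((-M + α.re)/2) (by linarith)) (h0 (α.re + 1) (by linarith))
        (α := α) (by linarith) (by linarith)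
      have d2 := hasDerivAt_mellin_piece measurableSet_Ioi hIoisub hf_aesm
        ((hinf (α.re - 1) (by linarith)).mono_set Ioi_subset_Ici_self)
        ((hinf ((α.re + b)/2) (by linarith)).mono_set Ioi_subset_Ici_self)
        (α := α) (by linarith) (by linarith)
      exact (d1.differentiableAt.add d2.differentiableAt).differentiableWithinAt
    · intro α hα1 hα2
      have hsplit : ∫ x in Ioi (0:ℝ), f x * (x:ℂ) ^ (α - 1) =
          (∫ x in Ioc (0:ℝ) 1, f x * (x:ℂ) ^ (α - 1)) +
          ∫ x in Ioi (1:ℝ), f x * (x:ℂ) ^ (α - 1) := by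
        rw [← Ioc_union_Ioi_eq_Ioi (zero_le_one' ℝ),
          setIntegral_union (Ioc_disjoint_Ioi le_rfl) measurableSet_Ioi
            (intf0 α hα1) (intf1 α hα2)]
      have hsum : ∫ x in Ioc (0:ℝ) 1, f x * (x:ℂ) ^ (α - 1) =
          (∫ x in Ioc (0:ℝ) 1, g x * (x:ℂ) ^ (α - 1)) +
          ∫ x in Ioc (0:ℝ) 1,
            c * (x : ℂ) ^ (ε : ℂ) * ((Real.log x : ℂ)) ^ k * (x : ℂ) ^ (α - 1) := by
        rw [← integral_add (intg α (by linarith)) (int_sing α hα1)]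
        apply integral_congr_ae
        filter_upwards with x
        simp only [hgdef]
        ring
      have hsing_val : ∫ x in Ioc (0:ℝ) 1,
          c * (x : ℂ) ^ (ε : ℂ) * ((Real.log x : ℂ)) ^ k * (x : ℂ) ^ (α - 1) =
          c * ((-1) ^ k * (Nat.factorial k : ℂ) / (α + (ε:ℂ)) ^ (k + 1)) := by
        have hcong : ∫ x in Ioc (0:ℝ) 1,
            c * (x : ℂ) ^ (ε : ℂ) * ((Real.log x : ℂ)) ^ k * (x : ℂ) ^ (α - 1) =
            ∫ x in Ioc (0:ℝ) 1,
              c * (((Real.log x : ℂ)) ^ k * (x : ℂ) ^ ((α + ε) - 1)) := by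
          apply setIntegral_congr_fun measurableSet_Ioc
          intro x hx
          have hxne : (x : ℂ) ≠ 0 := Complex.ofReal_ne_zero.mpr (ne_of_gt hx.1)
          have h' : (x : ℂ) ^ ((α + ε) - 1) = (x : ℂ) ^ (ε : ℂ) * (x : ℂ) ^ (α - 1) := by
            rw [← Complex.cpow_add _ _ hxne]
            ring_nf
          simp only [h']
          ring
        rw [hcong, MeasureTheory.integral_const_mul, integral_Ioc_log_pow_cpow k
          (s := α + ε) (by simp [Complex.add_re]; linarith)]
      rw [hsplit, hsum, hsing_val]
      ring
end
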